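/- arXiv:1512.03005 — 3 statements merged into one kernel-verified Lean document; each statement's English description precedes it below -/
import Mathlib

section
/- Let G be a finite graph with c connected components and let M be a matroid. Then M is the cycle matroid M(G) of G if and only if G is a framework for M and r(M) ≤ |V(G)| − c. -/
open Set Matroid
open scoped Classical

namespace QuasiGraphicPaper

universe u v

/-- A finite multigraph: a set `V` of vertices (in an ambient type `α`), a set `E` of
edges (in an ambient type `β`), and an incidence function assigning to each edge an
unordered pair of endpoints; loop-edges and parallel edges are allowed. -/
structure Graph (α : Type u) (β : Type v) where
  V : Set α
  E : Set β
  ends : β → Sym2 α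
  finV : V.Finite
  finE : E.Finite
  ends_mem : ∀ ⦃e⦄, e ∈ E → ∀ ⦃x⦄, x ∈ ends e → x ∈ V

namespace Graph

variable {α : Type u} {β : Type v}

/-- `e` is a loop-edge of `G` at the vertex `v`. -/
def IsLoopAt (G : Graph α β) (e : β) (v : α) : Prop :=
  e ∈ G.E ∧ G.ends e = Sym2.diag v

/-- `loops_G(v)`: the set of loop-edges of `G` at `v`. -/
def loopsAt (G : Graph α β) (v : α) : Set β := {e | G.IsLoopAt e v}

/-- Two vertices are adjacent if some edge of `G` has them as its two endpoints. -/
def Adj (G : Graph α β) (u v : α) : Prop := ∃ e ∈ G.E, G.ends e = s(u, v)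

/-- A graph is connected if any two of its vertices are joined by a walk.
(The graph with no vertices is connected.) -/
def Connected (G : Graph α β) : Prop :=
  ∀ u ∈ G.V, ∀ v ∈ G.V, Relation.ReflTransGen G.Adj u v

/-- Delete a set `X` of vertices: remove the vertices in `X` and all edges meeting `X`. -/
def deleteVertices (G : Graph α β) (X : Set α) : Graph α β where
  V := G.V \ X
  E := {e ∈ G.E | ∀ x ∈ G.ends e, x ∉ X}
  ends := G.ends
  finV := G.finV.sdiff
  finE := G.finE.subset (sep_subset _ _)
  ends_mem := fun e he x hx => ⟨G.ends_mem he.1 hx, he.2 x hx⟩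

/-- `G − v`: delete the single vertex `v`. -/
abbrev deleteVertex (G : Graph α β) (v : α) : Graph α β := G.deleteVertices {v}

/-- `G − e`: delete the edge `e` (keeping all vertices). -/
def deleteEdge (G : Graph α β) (e : β) : Graph α β where
  V := G.V
  E := G.E \ {e}
  ends := G.ends
  finV := G.finV
  finE := G.finE.sdiff
  ends_mem := fun f hf x hx => G.ends_mem hf.1 hx

/-- `G[X]`: the subgraph of `G` with edge set `X` (intersected with `E(G)`) and
no isolated vertices. -/
def restrictEdges (G : Graph α β) (X : Set β) : Graph α β where
  V := {v | ∃ e ∈ X ∩ G.E, v ∈ G.ends e}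
  E := X ∩ G.E
  ends := G.ends
  finV := G.finV.subset (by rintro v ⟨e, ⟨-, he⟩, hv⟩; exact G.ends_mem he hv)
  finE := G.finE.subset inter_subset_right
  ends_mem := fun e he x hx => ⟨e, he, hx⟩

/-- The connected component of `G` containing the vertex `v`, as a graph. -/
def componentOf (G : Graph α β) (v : α) : Graph α β where
  V := {u ∈ G.V | Relation.ReflTransGen G.Adj v u}
  E := {e ∈ G.E | ∀ x ∈ G.ends e, Relation.ReflTransGen G.Adj v x}
  ends := G.ends
  finV := G.finV.subset (sep_subset _ _)
  finE := G.finE.subset (sep_subset _ _)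
  ends_mem := fun e he x hx => ⟨G.ends_mem he.1 hx, he.2 x hx⟩

/-- `H` is a connected component of `G`. -/
def IsComponentOf (H G : Graph α β) : Prop := ∃ v ∈ G.V, H = G.componentOf v

/-- The number of connected components of `G`. -/
noncomputable def ncomponents (G : Graph α β) : ℕ :=
  {H : Graph α β | H.IsComponentOf G}.ncard

/-- `G` has at most two connected components: among any three vertices, two are joined. -/
def AtMostTwoComponents (G : Graph α β) : Prop :=
  ∀ u ∈ G.V, ∀ v ∈ G.V, ∀ w ∈ G.V,
    Relation.ReflTransGen G.Adj u v ∨ Relation.ReflTransGen G.Adj u w ∨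
      Relation.ReflTransGen G.Adj v w

/-- The degree of a vertex: loop-edges count twice. -/
noncomputable def degree (G : Graph α β) (v : α) : ℕ :=
  ({e ∈ G.E | v ∈ G.ends e ∧ ¬ (G.ends e).IsDiag}).ncard +
    2 * ({e ∈ G.E | G.ends e = Sym2.diag v}).ncard

/-- `G` is a cycle: it is connected, has at least one edge, and every vertex has
degree two. -/
def IsCycleGraph (G : Graph α β) : Prop :=
  G.E.Nonempty ∧ G.Connected ∧ ∀ v ∈ G.V, G.degree v = 2

/-- `C` is (the edge set of) a cycle of `G`. -/
def CycleSet (G : Graph α β) (C : Set β) : Prop :=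
  C ⊆ G.E ∧ (G.restrictEdges C).IsCycleGraph

/-- A forest: a graph with no cycles (in particular no loop-edges). -/
def IsForest (G : Graph α β) : Prop := ∀ C, ¬ G.CycleSet C

/-- `H` is a subgraph of `G`. -/
def IsSubgraph (H G : Graph α β) : Prop := H.V ⊆ G.V ∧ H.E ⊆ G.E ∧ H.ends = G.ends

/-- `G` is `k`-connected if `G − X` is connected for every vertex set `X` with `|X| < k`. -/
def KConnected (G : Graph α β) (k : ℕ) : Prop :=
  ∀ X : Set α, X.encard < k → (G.deleteVertices X).Connected

/-- A theta: a `2`-connected graph with exactly two vertices of degree three, all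
other vertices having degree two. -/
def IsTheta (H : Graph α β) : Prop :=
  H.KConnected 2 ∧
    ∃ a ∈ H.V, ∃ b ∈ H.V, a ≠ b ∧ H.degree a = 3 ∧ H.degree b = 3 ∧
      ∀ v ∈ H.V, v ≠ a → v ≠ b → H.degree v = 2

/-- `G / e`: contract the non-loop edge `e` with endpoints `x` and `y`
(identifying `y` with `x` and deleting `e`). -/
noncomputable def contractEdge (G : Graph α β) (e : β) (x y : α) (he : e ∈ G.E)
    (hxy : G.ends e = s(x, y)) (hne : x ≠ y) : Graph α β where
  V := G.V \ {y}
  E := G.E \ {e}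
  ends := fun f => (G.ends f).map (fun w => if w = y then x else w)
  finV := G.finV.sdiff
  finE := G.finE.sdiff
  ends_mem := by
    rintro f ⟨hf, -⟩ z hz
    rw [Sym2.mem_map] at hz
    obtain ⟨w, hw, rfl⟩ := hz
    by_cases hwy : w = y
    · rw [if_pos hwy]
      have hx : x ∈ G.ends e := by rw [hxy]; exact Sym2.mem_mk_left x y
      exact ⟨G.ends_mem he hx, by simp [hne]⟩
    · rw [if_neg hwy]
      exact ⟨G.ends_mem hf hw, by simp [hwy]⟩

/-- `G ∘ e`: for a loop-edge `e` at a vertex `v` which is the unique loop-edge at `v`,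
delete `v` and `e`, and replace every other edge `f = vw` at `v` by a loop-edge at `w`. -/
noncomputable def circ (G : Graph α β) (e : β) (v : α)
    (hno : ∀ f ∈ G.E, G.ends f = Sym2.diag v → f = e) : Graph α β where
  V := G.V \ {v}
  E := G.E \ {e}
  ends := fun f =>
    if h : f ∈ G.E ∧ f ≠ e ∧ v ∈ G.ends f then Sym2.diag (Sym2.Mem.other h.2.2)
    else G.ends f
  finV := G.finV.sdiff
  finE := G.finE.sdiff
  ends_mem := by
    rintro f ⟨hf, hfe⟩ z hz
    have hfe' : f ≠ e := fun h' => hfe (by simp [h'])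
    by_cases h : f ∈ G.E ∧ f ≠ e ∧ v ∈ G.ends f
    · rw [dif_pos h] at hz
      have hze : z = Sym2.Mem.other h.2.2 := by
        have h2 : z ∈ s(Sym2.Mem.other h.2.2, Sym2.Mem.other h.2.2) := hz
        rw [Sym2.mem_iff] at h2
        tauto
      subst hze
      refine ⟨G.ends_mem hf (Sym2.other_mem h.2.2), ?_⟩
      simp only [mem_singleton_iff]
      intro hzv
      apply h.2.1
      apply hno f hf
      show G.ends f = s(v, v)
      rw [← Sym2.other_spec h.2.2, hzv]
    · rw [dif_neg h] at hz
      refine ⟨G.ends_mem hf hz, ?_⟩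
      simp only [mem_singleton_iff]
      intro hzv
      subst hzv
      exact h ⟨hf, hfe', hz⟩

end Graph

/-! ### Matroid notions -/

variable {α : Type u} {β : Type v}

/-- The rank `r_M(X)` of a set `X` in a matroid `M`: the maximum size of an
independent subset of `X`. -/
noncomputable def rank (M : Matroid β) (X : Set β) : ℕ :=
  (⨆ I ∈ {I : Set β | M.Indep I ∧ I ⊆ X}, I.encard).toNat

/-- `C` is a circuit of `M` : a minimal dependent set. -/
def IsCircuit (M : Matroid β) (C : Set β) : Prop :=
  M.Dep C ∧ ∀ D, D ⊂ C → M.Indep D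

/-- `M \ D` : delete the set `D` from the matroid `M`. -/
def deleteM (M : Matroid β) (D : Set β) : Matroid β := M ↾ (M.E \ D)

/-- `M / C` : contract the set `C` in the matroid `M`. -/
def contractM (M : Matroid β) (C : Set β) : Matroid β := (M✶ ↾ (M✶.E \ C))✶

/-- `G` is a weak framework for `M`: conditions (1)–(3). -/
def WeakFramework (G : Graph α β) (M : Matroid β) : Prop :=
  G.E = M.E ∧
  (∀ H : Graph α β, H.IsComponentOf G → rank M H.E ≤ H.V.ncard) ∧
  (∀ v ∈ G.V,
    M.closure (G.deleteVertex v).E ⊆ (G.deleteVertex v).E ∪ G.loopsAt v)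

/-- `G` is a framework for `M`: conditions (1)–(4). -/
def Framework (G : Graph α β) (M : Matroid β) : Prop :=
  WeakFramework G M ∧
    ∀ C, IsCircuit M C → (G.restrictEdges C).AtMostTwoComponents

/-- `M` is the cycle matroid `M(G)` of `G` : the ground set of `M` is `E(G)`, and the
circuits of `M` are exactly the edge sets of cycles of `G`. -/
def IsCycleMatroidOf (G : Graph α β) (M : Matroid β) : Prop :=
  M.E = G.E ∧ ∀ C, IsCircuit M C ↔ G.CycleSet C

/-- A matroid is graphic if it is the cycle matroid of some graph. -/
def Graphic (M : Matroid β) : Prop :=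
  ∃ (γ : Type v) (G : Graph γ β), IsCycleMatroidOf G M

/-- A matroid is quasi-graphic if it has a framework. -/
def QuasiGraphic (M : Matroid β) : Prop :=
  ∃ (γ : Type v) (G : Graph γ β), Framework G M

/-- `M` is a lift of `N` if some single-element extension `M'` of `M` satisfies
`M' \ e = M` and `M' / e = N`. -/
def IsLiftOf (M N : Matroid β) : Prop :=
  ∃ M' : Matroid (Option β), (none : Option β) ∈ M'.E ∧
    deleteM M' {none} = M.map some (Option.some_injective β).injOn ∧
    contractM M' {none} = N.map some (Option.some_injective β).injOn

/-- `M` is a lifted-graphic matroid: for some single-element extension `M'` of `M`,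
`M' / e` is graphic. -/
def LiftedGraphic (M : Matroid β) : Prop :=
  ∃ M' : Matroid (Option β), (none : Option β) ∈ M'.E ∧
    deleteM M' {none} = M.map some (Option.some_injective β).injOn ∧
    Graphic (contractM M' {none})

/-- `(M, V)` is a framed matroid: `V` is a basis of `M` and every element of `M` is
spanned by a subset of `V` with at most two elements. -/
def FramedMatroid {γ : Type u} (M : Matroid γ) (V : Set γ) : Prop :=
  M.IsBase V ∧ ∀ e ∈ M.E, ∃ S ⊆ V, S.ncard ≤ 2 ∧ e ∈ M.closure S

/-- `M` is a frame matroid: `M = M' \ V` for some framed matroid `(M', V)`. -/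
def FrameMatroid (M : Matroid β) : Prop :=
  ∃ (γ : Type v) (M' : Matroid (β ⊕ γ)) (V : Set (β ⊕ γ)),
    FramedMatroid M' V ∧
      deleteM M' V = M.map Sum.inl Sum.inl_injective.injOn

/-- `M` is `3`-connected: it has no `k`-separation for `k ≤ 2`. -/
def ThreeConnected (M : Matroid β) : Prop :=
  ∀ X ⊆ M.E, ∀ k : ℕ, k ≤ 2 → (k : ℕ∞) ≤ X.encard → (k : ℕ∞) ≤ (M.E \ X).encard →
    rank M M.E + k ≤ rank M X + rank M (M.E \ X)

/-- `M` is representable over some field. -/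
def Representable (M : Matroid β) : Prop :=
  ∃ (F : Type v) (_ : Field F) (W : Type v) (_ : AddCommGroup W) (_ : Module F W)
    (φ : β → W), ∀ I ⊆ M.E, (M.Indep I ↔ LinearIndependent F (fun x : I => φ x))

/-- A collection `B` of cycles of `G` satisfies the theta-property if there is no
theta-subgraph of `G` with exactly two of its three cycles in `B`. -/
def ThetaProperty (G : Graph α β) (B : Set (Set β)) : Prop :=
  ∀ H : Graph α β, H.IsSubgraph G → H.IsTheta →
    ∀ C1 C2 C3, H.CycleSet C1 → H.CycleSet C2 → H.CycleSet C3 →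
      C1 ≠ C2 → C2 ≠ C3 → C1 ≠ C3 → C1 ∈ B → C2 ∈ B → C3 ∈ B

/-! ### Auxiliary development -/

section Aux

open Relation

variable {α : Type u} {β : Type v}

lemma sym2_exists_eq (z : Sym2 α) : ∃ x y, z = s(x, y) := by
  induction z using Sym2.ind with
  | _ x y => exact ⟨x, y, rfl⟩

lemma mem_diag_iff {v w : α} : v ∈ Sym2.diag w ↔ v = w := by
  show v ∈ s(w, w) ↔ _
  simp [Sym2.mem_iff]

lemma eq_diag_of_isDiag {z : Sym2 α} {v : α} (hd : z.IsDiag) (hv : v ∈ z) :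
    z = Sym2.diag v := by
  obtain ⟨x, y, rfl⟩ := sym2_exists_eq z
  rw [Sym2.mk_isDiag_iff] at hd
  subst hd
  rw [Sym2.mem_iff] at hv
  rcases hv with rfl | rfl <;> rfl

lemma biUnion_const {γ : Type*} {δ : Type*} {s : Set γ} {f : γ → Set δ} {c : Set δ}
    (hne : s.Nonempty) (h : ∀ a ∈ s, f a = c) : ⋃ a ∈ s, f a = c := by
  obtain ⟨a0, ha0⟩ := hne
  apply subset_antisymm
  · intro x hx
    simp only [mem_iUnion] at hx
    obtain ⟨a, ha, hx⟩ := hx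
    rwa [h a ha] at hx
  · intro x hx
    simp only [mem_iUnion]
    exact ⟨a0, ha0, by rwa [h a0 ha0]⟩

lemma ncard_image_le_of_factor {γ : Type*} {δ : Type*} {s : Set γ} (hs : s.Finite)
    (f g : γ → Set δ)
    (hfg : ∀ a ∈ s, ∀ b ∈ s, f a = f b → g a = g b) :
    (g '' s).ncard ≤ (f '' s).ncard := by
  classical
  set h : Set δ → Set δ := fun T => ⋃ a ∈ {a ∈ s | f a = T}, g a with hh
  have key : ∀ a ∈ s, h (f a) = g a := by
    intro a ha
    have hne : {b ∈ s | f b = f a}.Nonempty := ⟨a, ha, rfl⟩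
    exact biUnion_const hne (fun b hb => hfg b hb.1 a ha hb.2)
  have himg : g '' s = h '' (f '' s) := by
    rw [Set.image_image]
    exact (Set.image_congr fun a ha => (key a ha).symm)
  rw [himg]
  exact Set.ncard_image_le (hs.image f)

namespace Graph

variable (G : Graph α β)

/-- Adjacency using only edges from `X`. -/
def AdjOn (X : Set β) (u v : α) : Prop := ∃ e ∈ X, G.ends e = s(u, v)

/-- Connectivity using only edges from `X`. -/
def Reach (X : Set β) : α → α → Prop := Relation.ReflTransGen (G.AdjOn X)

/-- Vertices incident with an edge of `X`. -/
def VOn (X : Set β) : Set α := {v | ∃ e ∈ X, v ∈ G.ends e}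

/-- Non-loop edges of `X` at `v`. -/
def eAt (X : Set β) (v : α) : Set β := {e ∈ X | v ∈ G.ends e ∧ ¬(G.ends e).IsDiag}

/-- Loop edges of `X` at `v`. -/
def lAt (X : Set β) (v : α) : Set β := {e ∈ X | G.ends e = Sym2.diag v}

/-- Degree of `v` using edges of `X`. -/
noncomputable def degOn (X : Set β) (v : α) : ℕ :=
  (G.eAt X v).ncard + 2 * (G.lAt X v).ncard

/-- `X` contains no cycle. -/
def AcyclicOn (X : Set β) : Prop := ∀ C, C ⊆ X → ¬ G.CycleSet C

/-- The `X`-connectivity class of `v` within `S`. -/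
def cls (X : Set β) (S : Set α) (v : α) : Set α := {u ∈ S | G.Reach X v u}

/-- The set of `X`-connectivity classes of members of `S`. -/
def classesOn (X : Set β) (S : Set α) : Set (Set α) := (fun v => G.cls X S v) '' S

variable {G}

/-! #### Translation to `restrictEdges` -/

lemma restrict_V_eq {C : Set β} (hCE : C ⊆ G.E) : (G.restrictEdges C).V = G.VOn C := by
  show {v | ∃ e ∈ C ∩ G.E, v ∈ G.ends e} = _
  rw [inter_eq_self_of_subset_left hCE]
  rfl

lemma restrict_E_eq {C : Set β} (hCE : C ⊆ G.E) : (G.restrictEdges C).E = C := by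
  show C ∩ G.E = C
  exact inter_eq_self_of_subset_left hCE

lemma restrict_adj_eq {C : Set β} (hCE : C ⊆ G.E) :
    (G.restrictEdges C).Adj = G.AdjOn C := by
  funext u v
  show (∃ e ∈ C ∩ G.E, G.ends e = s(u, v)) = (∃ e ∈ C, G.ends e = s(u, v))
  rw [inter_eq_self_of_subset_left hCE]

lemma restrict_degree_eq {C : Set β} (hCE : C ⊆ G.E) (v : α) :
    (G.restrictEdges C).degree v = G.degOn C v := by
  show {e ∈ C ∩ G.E | v ∈ G.ends e ∧ ¬(G.ends e).IsDiag}.ncard +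
      2 * {e ∈ C ∩ G.E | G.ends e = Sym2.diag v}.ncard = _
  rw [inter_eq_self_of_subset_left hCE]
  rfl

lemma cycleSet_iff {C : Set β} :
    G.CycleSet C ↔ C ⊆ G.E ∧ C.Nonempty ∧
      (∀ u ∈ G.VOn C, ∀ v ∈ G.VOn C, G.Reach C u v) ∧
      ∀ v ∈ G.VOn C, G.degOn C v = 2 := by
  constructor
  · rintro ⟨hCE, hne, hconn, hdeg⟩
    refine ⟨hCE, ?_, ?_, ?_⟩
    · obtain ⟨e, he⟩ := hne
      rw [restrict_E_eq hCE] at he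
      exact ⟨e, he⟩
    · intro u hu v hv
      have h := hconn u (by rwa [restrict_V_eq hCE]) v (by rwa [restrict_V_eq hCE])
      rwa [restrict_adj_eq hCE] at h
    · intro v hv
      rw [← restrict_degree_eq hCE]
      exact hdeg v (by rwa [restrict_V_eq hCE])
  · rintro ⟨hCE, hne, hconn, hdeg⟩
    refine ⟨hCE, ?_, ?_, ?_⟩
    · rw [restrict_E_eq hCE]; exact hne
    · intro u hu v hv
      rw [restrict_adj_eq hCE]
      exact hconn u (by rwa [restrict_V_eq hCE] at hu) v (by rwa [restrict_V_eq hCE] at hv)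
    · intro v hv
      rw [restrict_degree_eq hCE]
      exact hdeg v (by rwa [restrict_V_eq hCE] at hv)

/-! #### Basic facts -/

lemma VOn_mono {X Y : Set β} (h : X ⊆ Y) : G.VOn X ⊆ G.VOn Y := by
  rintro v ⟨e, he, hv⟩; exact ⟨e, h he, hv⟩

lemma VOn_subset_V {X : Set β} (hX : X ⊆ G.E) : G.VOn X ⊆ G.V := by
  rintro v ⟨e, he, hv⟩; exact G.ends_mem (hX he) hv

lemma eAt_subset (X : Set β) (v : α) : G.eAt X v ⊆ X := sep_subset _ _

lemma lAt_subset (X : Set β) (v : α) : G.lAt X v ⊆ X := sep_subset _ _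

lemma eAt_mono {X Y : Set β} (h : X ⊆ Y) (v : α) : G.eAt X v ⊆ G.eAt Y v := by
  rintro e ⟨he, h2⟩; exact ⟨h he, h2⟩

lemma lAt_mono {X Y : Set β} (h : X ⊆ Y) (v : α) : G.lAt X v ⊆ G.lAt Y v := by
  rintro e ⟨he, h2⟩; exact ⟨h he, h2⟩

lemma adjOn_symm {X : Set β} {u v : α} (h : G.AdjOn X u v) : G.AdjOn X v u := by
  obtain ⟨e, he, hends⟩ := h
  exact ⟨e, he, hends.trans Sym2.eq_swap⟩

lemma reach_symm {X : Set β} {u v : α} (h : G.Reach X u v) : G.Reach X v u :=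
  (@Relation.ReflTransGen.symmetric _ _ ⟨fun _ _ hh => adjOn_symm hh⟩).symm _ _ h

lemma reach_mono {X Y : Set β} (hXY : X ⊆ Y) {u v : α} (h : G.Reach X u v) :
    G.Reach Y u v := by
  induction h with
  | refl => exact .refl
  | tail _ hbc ih =>
    obtain ⟨e, he, hends⟩ := hbc
    exact ih.tail ⟨e, hXY he, hends⟩

lemma reach_stay {X : Set β} {v : α} (hv : ∀ e ∈ X, v ∉ G.ends e) {u : α}
    (h : G.Reach X v u) : u = v := by
  rcases h.cases_head with h | ⟨c, ⟨e, he, hends⟩, _⟩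
  · exact h.symm
  · have hm : v ∈ G.ends e := by rw [hends]; exact Sym2.mem_mk_left v c
    exact absurd hm (hv e he)

lemma loop_cycleSet {e : β} (he : e ∈ G.E) (hd : (G.ends e).IsDiag) :
    G.CycleSet {e} := by
  obtain ⟨x, y, hxy⟩ := sym2_exists_eq (G.ends e)
  have hxy' : x = y := by rwa [hxy, Sym2.mk_isDiag_iff] at hd
  subst hxy'
  have hVOn : G.VOn {e} = {x} := by
    ext v
    constructor
    · rintro ⟨f, rfl, hv⟩
      rw [hxy, Sym2.mem_iff] at hv
      rcases hv with rfl | rfl <;> rfl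
    · rintro rfl
      exact ⟨e, rfl, by rw [hxy]; exact Sym2.mem_mk_left _ _⟩
  rw [cycleSet_iff]
  refine ⟨singleton_subset_iff.mpr he, ⟨e, rfl⟩, ?_, ?_⟩
  · intro u hu v hv
    rw [hVOn, mem_singleton_iff] at hu hv
    subst hu; subst hv; exact .refl
  · intro v hv
    rw [hVOn, mem_singleton_iff] at hv
    subst hv
    have h1 : G.eAt {e} v = ∅ := by
      ext f
      constructor
      · rintro ⟨rfl, _, hnd⟩
        exact absurd hd hnd
      · exact fun h => h.elim
    have h2 : G.lAt {e} v = {e} := by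
      ext f
      constructor
      · rintro ⟨rfl, _⟩; rfl
      · rintro rfl
        exact ⟨rfl, by rw [hxy]; rfl⟩
    unfold degOn
    rw [h1, h2, Set.ncard_empty, Set.ncard_singleton]

lemma noloop_of_acyclic {X : Set β} (hac : G.AcyclicOn X) (hX : X ⊆ G.E) {e : β}
    (he : e ∈ X) : ¬(G.ends e).IsDiag :=
  fun hd => hac {e} (singleton_subset_iff.mpr he) (loop_cycleSet (hX he) hd)

lemma degOn_pos {X : Set β} {v : α} (hXfin : X.Finite) (hv : v ∈ G.VOn X) :
    1 ≤ G.degOn X v := by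
  obtain ⟨e, he, hve⟩ := hv
  by_cases hd : (G.ends e).IsDiag
  · have hmem : e ∈ G.lAt X v := ⟨he, eq_diag_of_isDiag hd hve⟩
    have h1 : 0 < (G.lAt X v).ncard :=
      (Set.ncard_pos (hXfin.subset (lAt_subset _ _))).mpr ⟨e, hmem⟩
    unfold degOn; omega
  · have hmem : e ∈ G.eAt X v := ⟨he, hve, hd⟩
    have h1 : 0 < (G.eAt X v).ncard :=
      (Set.ncard_pos (hXfin.subset (eAt_subset _ _))).mpr ⟨e, hmem⟩
    unfold degOn; omega

lemma degOn_eq_zero {X : Set β} {v : α} (hv : v ∉ G.VOn X) : G.degOn X v = 0 := by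
  have h1 : G.eAt X v = ∅ := by
    ext f
    constructor
    · rintro ⟨hf, hvf, _⟩
      exact absurd ⟨f, hf, hvf⟩ hv
    · exact fun h => h.elim
  have h2 : G.lAt X v = ∅ := by
    ext f
    constructor
    · rintro ⟨hf, hdf⟩
      exact absurd ⟨f, hf, by rw [hdf]; exact mem_diag_iff.mpr rfl⟩ hv
    · exact fun h => h.elim
  unfold degOn
  rw [h1, h2, Set.ncard_empty]

lemma degOn_union {X Y : Set β} (hX : X.Finite) (hY : Y.Finite) (hd : Disjoint X Y)
    (v : α) : G.degOn (X ∪ Y) v = G.degOn X v + G.degOn Y v := by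
  have he : G.eAt (X ∪ Y) v = G.eAt X v ∪ G.eAt Y v := by
    ext f
    constructor
    · rintro ⟨hf | hf, h2⟩
      · exact Or.inl ⟨hf, h2⟩
      · exact Or.inr ⟨hf, h2⟩
    · rintro (⟨hf, h2⟩ | ⟨hf, h2⟩)
      · exact ⟨Or.inl hf, h2⟩
      · exact ⟨Or.inr hf, h2⟩
  have hl : G.lAt (X ∪ Y) v = G.lAt X v ∪ G.lAt Y v := by
    ext f
    constructor
    · rintro ⟨hf | hf, h2⟩
      · exact Or.inl ⟨hf, h2⟩
      · exact Or.inr ⟨hf, h2⟩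
    · rintro (⟨hf, h2⟩ | ⟨hf, h2⟩)
      · exact ⟨Or.inl hf, h2⟩
      · exact ⟨Or.inr hf, h2⟩
  have hde : Disjoint (G.eAt X v) (G.eAt Y v) :=
    hd.mono (eAt_subset _ _) (eAt_subset _ _)
  have hdl : Disjoint (G.lAt X v) (G.lAt Y v) :=
    hd.mono (lAt_subset _ _) (lAt_subset _ _)
  unfold degOn
  rw [he, hl, Set.ncard_union_eq hde (hX.subset (eAt_subset _ _)) (hY.subset (eAt_subset _ _)),
    Set.ncard_union_eq hdl (hX.subset (lAt_subset _ _)) (hY.subset (lAt_subset _ _))]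
  ring

/-! #### Classes -/

lemma self_mem_cls {X : Set β} {S : Set α} {v : α} (hv : v ∈ S) : v ∈ G.cls X S v :=
  ⟨hv, .refl⟩

lemma cls_eq_of_reach {X : Set β} {S : Set α} {u v : α} (h : G.Reach X u v) :
    G.cls X S u = G.cls X S v := by
  ext w
  simp only [cls, mem_sep_iff]
  exact and_congr_right fun _ =>
    ⟨fun h' => (reach_symm h).trans h', fun h' => h.trans h'⟩

lemma reach_of_cls_eq {X : Set β} {S : Set α} {u v : α} (hv : v ∈ S)
    (h : G.cls X S u = G.cls X S v) : G.Reach X u v := by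
  have h2 := self_mem_cls (G := G) (X := X) hv
  rw [← h] at h2
  exact h2.2

lemma mem_classesOn {X : Set β} {S : Set α} {v : α} (hv : v ∈ S) :
    G.cls X S v ∈ G.classesOn X S := Set.mem_image_of_mem _ hv

lemma classesOn_finite {X : Set β} {S : Set α} (hS : S.Finite) :
    (G.classesOn X S).Finite := hS.image _

lemma reach_of_classes_subsingleton {X : Set β} {S : Set α} (hS : S.Finite)
    (h1 : (G.classesOn X S).ncard ≤ 1) {u v : α} (hu : u ∈ S) (hv : v ∈ S) :
    G.Reach X u v := by
  by_contra hr
  have hne : G.cls X S u ≠ G.cls X S v := fun h => hr (reach_of_cls_eq hv h)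
  have h2 : 1 < (G.classesOn X S).ncard :=
    (Set.one_lt_ncard (classesOn_finite hS)).mpr
      ⟨_, mem_classesOn hu, _, mem_classesOn hv, hne⟩
  omega

lemma classesOn_empty_ncard {S : Set α} (hS : S.Finite) :
    (G.classesOn (∅ : Set β) S).ncard = S.ncard := by
  have hcl : ∀ v ∈ S, G.cls (∅ : Set β) S v = {v} := by
    intro v hv
    ext u
    simp only [cls, mem_sep_iff, mem_singleton_iff]
    constructor
    · rintro ⟨_, hr⟩
      exact reach_stay (fun e he => absurd he (notMem_empty e)) hr
    · rintro rfl; exact ⟨hv, .refl⟩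
  unfold classesOn
  rw [Set.ncard_image_of_injOn]
  intro a ha b hb hab
  change G.cls ∅ S a = G.cls ∅ S b at hab
  rw [hcl a ha, hcl b hb] at hab
  exact singleton_eq_singleton_iff.mp hab

lemma classesOn_anti {X Y : Set β} {S : Set α} (hS : S.Finite) (hXY : X ⊆ Y) :
    (G.classesOn Y S).ncard ≤ (G.classesOn X S).ncard :=
  ncard_image_le_of_factor hS (fun v => G.cls X S v) (fun v => G.cls Y S v)
    (fun _ _ b hb h => cls_eq_of_reach (reach_mono hXY (reach_of_cls_eq hb h)))

lemma reach_delete_decomp {X : Set β} {e : β} {x y : α} (hends : G.ends e = s(x, y))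
    {u w : α} (h : G.Reach X u w) :
    G.Reach (X \ {e}) u w ∨
      ((G.Reach (X \ {e}) u x ∨ G.Reach (X \ {e}) u y) ∧
       (G.Reach (X \ {e}) w x ∨ G.Reach (X \ {e}) w y)) := by
  induction h with
  | refl => exact Or.inl .refl
  | @tail b c hub hbc ih =>
    obtain ⟨f, hfX, hf⟩ := hbc
    by_cases hfe : f = e
    · subst hfe
      rw [hends] at hf
      have hbc' : (b = x ∧ c = y) ∨ (b = y ∧ c = x) := by
        rw [Sym2.eq_iff] at hf; tauto
      right
      constructor
      · rcases ih with h' | ⟨hu', _⟩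
        · rcases hbc' with ⟨rfl, _⟩ | ⟨rfl, _⟩
          · exact Or.inl h'
          · exact Or.inr h'
        · exact hu'
      · rcases hbc' with ⟨_, rfl⟩ | ⟨_, rfl⟩
        · exact Or.inr .refl
        · exact Or.inl .refl
    · have hstep : G.AdjOn (X \ {e}) b c := ⟨f, ⟨hfX, hfe⟩, hf⟩
      rcases ih with h' | ⟨hu', hw'⟩
      · exact Or.inl (h'.tail hstep)
      · right
        refine ⟨hu', ?_⟩
        have hcb : G.Reach (X \ {e}) c b := ReflTransGen.single (adjOn_symm hstep)
        rcases hw' with h1 | h1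
        · exact Or.inl (hcb.trans h1)
        · exact Or.inr (hcb.trans h1)

lemma classes_delete_le {X : Set β} {S : Set α} (hS : S.Finite) {e : β} {x y : α}
    (hends : G.ends e = s(x, y)) :
    (G.classesOn (X \ {e}) S).ncard ≤ (G.classesOn X S).ncard + 1 := by
  classical
  set X' := X \ {e} with hX'
  set T0 := G.cls X' S y with hT0
  set S' := {v ∈ S | G.cls X' S v ≠ T0} with hS'
  have hAfin : (G.classesOn X' S).Finite := classesOn_finite hS
  have h1 : (G.classesOn X' S).ncard ≤ (G.classesOn X' S \ {T0}).ncard + 1 := by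
    have hsub : G.classesOn X' S ⊆ insert T0 (G.classesOn X' S \ {T0}) := by
      intro T hT
      rcases eq_or_ne T T0 with rfl | h
      · exact mem_insert _ _
      · exact mem_insert_of_mem _ ⟨hT, h⟩
    calc (G.classesOn X' S).ncard
        ≤ (insert T0 (G.classesOn X' S \ {T0})).ncard :=
          Set.ncard_le_ncard hsub (hAfin.sdiff.insert _)
      _ ≤ (G.classesOn X' S \ {T0}).ncard + 1 := Set.ncard_insert_le _ _
  have h2 : G.classesOn X' S \ {T0} = (fun v => G.cls X' S v) '' S' := by
    ext T
    constructor
    · rintro ⟨⟨v, hv, rfl⟩, hT⟩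
      exact ⟨v, ⟨hv, by simpa using hT⟩, rfl⟩
    · rintro ⟨v, ⟨hv, hvT⟩, rfl⟩
      exact ⟨⟨v, hv, rfl⟩, by simpa using hvT⟩
  have h3 : ((fun v => G.cls X' S v) '' S').ncard ≤ ((fun v => G.cls X S v) '' S').ncard := by
    apply ncard_image_le_of_factor (hS.subset (sep_subset _ _))
    intro a ha b hb hab
    have hr : G.Reach X a b := reach_of_cls_eq hb.1 hab
    rcases reach_delete_decomp hends hr with h' | ⟨ha', hb'⟩
    · exact cls_eq_of_reach h'
    · have hax : G.Reach X' a x := by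
        rcases ha' with h | h
        · exact h
        · exact absurd (cls_eq_of_reach h) ha.2
      have hbx : G.Reach X' b x := by
        rcases hb' with h | h
        · exact h
        · exact absurd (cls_eq_of_reach h) hb.2
      exact cls_eq_of_reach (hax.trans (reach_symm hbx))
  have h4 : ((fun v => G.cls X S v) '' S').ncard ≤ (G.classesOn X S).ncard :=
    Set.ncard_le_ncard (image_mono (sep_subset _ _)) (classesOn_finite hS)
  have h5 : (G.classesOn X' S \ {T0}).ncard = ((fun v => G.cls X' S v) '' S').ncard := by
    rw [h2]
  omega

lemma classes_leaf {X : Set β} {S : Set α} (hS : S.Finite) {e : β} {x y : α}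
    (heX : e ∈ X) (hends : G.ends e = s(x, y)) (hxy : x ≠ y)
    (hx : x ∈ S) (hy : y ∈ S)
    (hleaf : ∀ f ∈ X \ {e}, y ∉ G.ends f) :
    (G.classesOn X S).ncard + 1 ≤ (G.classesOn (X \ {e}) S).ncard := by
  classical
  set X' := X \ {e} with hX'
  have hclsy : G.cls X' S y = {y} := by
    ext u
    simp only [cls, mem_sep_iff, mem_singleton_iff]
    constructor
    · rintro ⟨_, hr⟩
      exact reach_stay (fun f hf => hleaf f hf) hr
    · rintro rfl; exact ⟨hy, .refl⟩
  have hclsne : G.cls X' S x ≠ G.cls X' S y := by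
    intro h
    have hxm : x ∈ G.cls X' S x := self_mem_cls hx
    rw [h, hclsy] at hxm
    exact hxy (by simpa using hxm)
  set h : Set α → Set α := fun T => ⋃ a ∈ {a ∈ S | G.cls X' S a = T}, G.cls X S a with hh
  have key : ∀ a ∈ S, h (G.cls X' S a) = G.cls X S a := by
    intro a ha
    refine biUnion_const ⟨a, ha, rfl⟩ ?_
    rintro b ⟨hb, hfb⟩
    exact cls_eq_of_reach (reach_mono diff_subset (reach_of_cls_eq ha hfb))
  have himg : G.classesOn X S = h '' (G.classesOn X' S \ {G.cls X' S y}) := by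
    apply subset_antisymm
    · rintro T ⟨v, hv, rfl⟩
      show G.cls X S v ∈ _
      by_cases hvy : G.cls X' S v = G.cls X' S y
      · have hrvy : G.Reach X' v y := reach_of_cls_eq hy hvy
        have hrxy : G.Reach X x y := ReflTransGen.single ⟨e, heX, hends⟩
        have hvx : G.cls X S v = G.cls X S x :=
          cls_eq_of_reach ((reach_mono diff_subset hrvy).trans (reach_symm hrxy))
        rw [hvx, ← key x hx]
        exact mem_image_of_mem _ ⟨mem_classesOn hx, by simpa using hclsne⟩
      · rw [← key v hv]
        exact mem_image_of_mem _ ⟨mem_classesOn hv, by simpa using hvy⟩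
    · rintro T ⟨T', ⟨⟨v, hv, rfl⟩, _⟩, rfl⟩
      show h ((fun v => G.cls X' S v) v) ∈ _
      rw [show (fun v => G.cls X' S v) v = G.cls X' S v from rfl, key v hv]
      exact mem_classesOn hv
  have hT0mem : G.cls X' S y ∈ G.classesOn X' S := mem_classesOn hy
  have hfin' : (G.classesOn X' S).Finite := classesOn_finite hS
  have h5 : (G.classesOn X S).ncard ≤ (G.classesOn X' S \ {G.cls X' S y}).ncard := by
    rw [himg]
    exact Set.ncard_image_le hfin'.sdiff
  have h6 : (G.classesOn X' S \ {G.cls X' S y}).ncard = (G.classesOn X' S).ncard - 1 :=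
    Set.ncard_diff_singleton_of_mem hT0mem
  have h7 : 0 < (G.classesOn X' S).ncard := (Set.ncard_pos hfin').mpr ⟨_, hT0mem⟩
  omega

/-! #### Existence of cycles -/

lemma exists_cycle_of_min_degree {X : Set β} (hXE : X ⊆ G.E) (hne : X.Nonempty)
    (hdeg : ∀ v ∈ G.VOn X, 2 ≤ G.degOn X v) : ∃ C, C ⊆ X ∧ G.CycleSet C := by
  classical
  by_cases hloop : ∃ e ∈ X, (G.ends e).IsDiag
  · obtain ⟨e, heX, hd⟩ := hloop
    exact ⟨{e}, singleton_subset_iff.mpr heX, loop_cycleSet (hXE heX) hd⟩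
  push_neg at hloop
  have hVfin := G.finV
  set B := G.V.ncard with hB
  set P : ℕ → Prop := fun n => ∃ (vs : ℕ → α) (es : ℕ → β),
    (∀ i, i < n → es i ∈ X ∧ G.ends (es i) = s(vs i, vs (i+1))) ∧
    Set.InjOn vs (Set.Iic n) with hPdef
  have hbound : ∀ n, 1 ≤ n → P n → n + 1 ≤ B := by
    rintro n hn ⟨vs, es, hpath, hinj⟩
    have hv : ∀ i ∈ Set.Iic n, vs i ∈ G.V := by
      intro i hi
      rw [Set.mem_Iic] at hi
      rcases Nat.lt_or_ge i n with h | h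
      · exact G.ends_mem (hXE (hpath i h).1)
          (by rw [(hpath i h).2]; exact Sym2.mem_mk_left _ _)
      · have hin : i = n := le_antisymm hi h
        subst hin
        obtain ⟨h1, h2⟩ := hpath (i - 1) (by omega)
        have h3 : i - 1 + 1 = i := by omega
        rw [h3] at h2
        exact G.ends_mem (hXE h1) (by rw [h2]; exact Sym2.mem_mk_right _ _)
    have himg : (vs '' Set.Iic n) ⊆ G.V := by
      rintro _ ⟨i, hi, rfl⟩; exact hv i hi
    have hcard : (vs '' Set.Iic n).ncard = n + 1 := by
      rw [Set.ncard_image_of_injOn hinj, ← Finset.coe_Iic, Set.ncard_coe_finset,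
        Nat.card_Iic]
    calc n + 1 = (vs '' Set.Iic n).ncard := hcard.symm
      _ ≤ B := Set.ncard_le_ncard himg hVfin
  obtain ⟨e1, he1⟩ := hne
  obtain ⟨a, b, hab⟩ := sym2_exists_eq (G.ends e1)
  have hane : a ≠ b := by
    intro h
    exact hloop e1 he1 (by rw [hab, h, Sym2.mk_isDiag_iff])
  have hP1 : P 1 := by
    refine ⟨fun i => if i = 0 then a else b, fun _ => e1, ?_, ?_⟩
    · intro i hi
      have hi0 : i = 0 := by omega
      subst hi0
      simpa using ⟨he1, hab⟩
    · intro i hi j hj hij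
      rw [Set.mem_Iic] at hi hj
      simp only at hij
      have hi' : i = 0 ∨ i = 1 := by omega
      have hj' : j = 0 ∨ j = 1 := by omega
      rcases hi' with rfl | rfl <;> rcases hj' with rfl | rfl <;> simp_all
  have h1B : 1 + 1 ≤ B := hbound 1 le_rfl hP1
  set N := Nat.findGreatest P B with hN
  have hPN : P N := Nat.findGreatest_spec (m := 1) (by omega) hP1
  have hN1 : 1 ≤ N := Nat.le_findGreatest (by omega) hP1
  have hmax : ¬ P (N + 1) := by
    intro hPN1
    have h2 : N + 2 ≤ B := hbound (N + 1) (by omega) hPN1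
    exact Nat.findGreatest_is_greatest (Nat.lt_succ_self N) (by omega) hPN1
  obtain ⟨vs, es, hpath, hinj⟩ := hPN
  obtain ⟨heN1X, heN1ends⟩ := hpath (N - 1) (by omega)
  have hNsucc : N - 1 + 1 = N := by omega
  rw [hNsucc] at heN1ends
  have hvN : vs N ∈ G.ends (es (N - 1)) := by
    rw [heN1ends]; exact Sym2.mem_mk_right _ _
  have hvNV : vs N ∈ G.VOn X := ⟨es (N - 1), heN1X, hvN⟩
  have hlAt : G.lAt X (vs N) = ∅ := by
    ext f
    constructor
    · rintro ⟨hf, hdf⟩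
      exact absurd (by rw [hdf]; exact Sym2.mk_isDiag_iff.mpr rfl) (hloop f hf)
    · exact fun h => h.elim
  have hdeg2 : 2 ≤ (G.eAt X (vs N)).ncard := by
    have h2 := hdeg _ hvNV
    unfold degOn at h2
    rw [hlAt, Set.ncard_empty] at h2
    omega
  have heeAt : es (N - 1) ∈ G.eAt X (vs N) := ⟨heN1X, hvN, hloop _ heN1X⟩
  obtain ⟨f, hf, hfne⟩ := Set.exists_ne_of_one_lt_ncard (s := G.eAt X (vs N)) (by omega) (es (N - 1))
  obtain ⟨hfX, hvNf, hfnd⟩ := hf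
  set w := Sym2.Mem.other hvNf with hwdef
  have hfends : G.ends f = s(vs N, w) := (Sym2.other_spec hvNf).symm
  have hwvN : w ≠ vs N := by
    intro h
    apply hfnd
    rw [hfends, h]
    exact Sym2.mk_isDiag_iff.mpr rfl
  have hfnotes : ∀ j, j < N → f ≠ es j := by
    intro j hj hfe
    have h2 := (hpath j hj).2
    rw [← hfe, hfends, Sym2.eq_iff] at h2
    rcases h2 with ⟨h3, _⟩ | ⟨h3, _⟩
    · have := hinj (Set.mem_Iic.mpr le_rfl) (Set.mem_Iic.mpr hj.le) h3
      omega
    · have h5 := hinj (Set.mem_Iic.mpr le_rfl) (Set.mem_Iic.mpr (by omega : j + 1 ≤ N)) h3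
      have h6 : j = N - 1 := by omega
      rw [h6] at hfe
      exact hfne hfe
  by_cases hwmem : ∃ i, i ≤ N ∧ w = vs i
  · obtain ⟨i, hiN, hwi⟩ := hwmem
    have hiN' : i ≠ N := fun h => hwvN (by rw [hwi, h])
    have hiltN : i < N := lt_of_le_of_ne hiN hiN'
    have hfends' : G.ends f = s(vs N, vs i) := by rw [hfends, hwi]
    set C := insert f (es '' Set.Ico i N) with hC
    have hCX : C ⊆ X := by
      rintro g (rfl | ⟨j, hj, rfl⟩)
      · exact hfX
      · exact (hpath j (Set.mem_Ico.mp hj).2).1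
    have hfC : f ∈ C := mem_insert _ _
    have heskC : ∀ k, i ≤ k → k < N → es k ∈ C := fun k h1 h2 =>
      Or.inr ⟨k, Set.mem_Ico.mpr ⟨h1, h2⟩, rfl⟩
    have hndC : ∀ g ∈ C, ¬(G.ends g).IsDiag := fun g hg => hloop g (hCX hg)
    have hVOn : G.VOn C = vs '' Set.Icc i N := by
      apply subset_antisymm
      · rintro v ⟨g, hg, hvg⟩
        rcases hg with rfl | ⟨j, hj, rfl⟩
        · rw [hfends'] at hvg
          rcases Sym2.mem_iff.mp hvg with rfl | rfl
          · exact ⟨N, Set.mem_Icc.mpr ⟨hiN, le_rfl⟩, rfl⟩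
          · exact ⟨i, Set.mem_Icc.mpr ⟨le_rfl, hiN⟩, rfl⟩
        · obtain ⟨hji, hjN⟩ := Set.mem_Ico.mp hj
          rw [(hpath j hjN).2] at hvg
          rcases Sym2.mem_iff.mp hvg with rfl | rfl
          · exact ⟨j, Set.mem_Icc.mpr ⟨hji, hjN.le⟩, rfl⟩
          · exact ⟨j + 1, Set.mem_Icc.mpr ⟨by omega, by omega⟩, rfl⟩
      · rintro _ ⟨j, hj, rfl⟩
        obtain ⟨hji, hjN⟩ := Set.mem_Icc.mp hj
        rcases Nat.lt_or_ge j N with h | h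
        · exact ⟨es j, heskC j hji h, by rw [(hpath j h).2]; exact Sym2.mem_mk_left _ _⟩
        · have hjN' : j = N := by omega
          subst hjN'
          exact ⟨f, hfC, by rw [hfends']; exact Sym2.mem_mk_left _ _⟩
    have hesinj : ∀ j k, j < N → k < N → es j = es k → j = k := by
      intro j k hj hk hjk
      have h2 := (hpath j hj).2
      rw [hjk, (hpath k hk).2] at h2
      rw [Sym2.eq_iff] at h2
      rcases h2 with ⟨h3, _⟩ | ⟨h3, h4⟩
      · exact (hinj (Set.mem_Iic.mpr hk.le) (Set.mem_Iic.mpr hj.le) h3).symm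
      · have e1 := hinj (Set.mem_Iic.mpr hk.le) (Set.mem_Iic.mpr (by omega : j + 1 ≤ N)) h3
        have e2 := hinj (Set.mem_Iic.mpr (by omega : k + 1 ≤ N)) (Set.mem_Iic.mpr hj.le) h4
        omega
    have hmemf : ∀ j, j ≤ N → (vs j ∈ G.ends f ↔ j = N ∨ j = i) := by
      intro j hjN
      rw [hfends', Sym2.mem_iff]
      constructor
      · rintro (h | h)
        · exact Or.inl (hinj (Set.mem_Iic.mpr hjN) (Set.mem_Iic.mpr le_rfl) h)
        · exact Or.inr (hinj (Set.mem_Iic.mpr hjN) (Set.mem_Iic.mpr hiN) h)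
      · rintro (rfl | rfl)
        · exact Or.inl rfl
        · exact Or.inr rfl
    have hmemes : ∀ j k, j ≤ N → k < N → (vs j ∈ G.ends (es k) ↔ j = k ∨ j = k + 1) := by
      intro j k hjN hk
      rw [(hpath k hk).2, Sym2.mem_iff]
      constructor
      · rintro (h | h)
        · exact Or.inl (hinj (Set.mem_Iic.mpr hjN) (Set.mem_Iic.mpr hk.le) h)
        · exact Or.inr (hinj (Set.mem_Iic.mpr hjN) (Set.mem_Iic.mpr (by omega : k + 1 ≤ N)) h)
      · rintro (rfl | rfl)
        · exact Or.inl rfl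
        · exact Or.inr rfl
    have hchain : ∀ j, i ≤ j → j ≤ N → G.Reach C (vs i) (vs j) := by
      intro j
      induction j with
      | zero =>
        intro hij _
        have h0 : i = 0 := by omega
        subst h0
        exact .refl
      | succ j ihj =>
        intro hij hjN
        rcases Nat.lt_or_ge i (j + 1) with h | h
        · have hr := ihj (by omega) (by omega)
          exact hr.tail ⟨es j, heskC j (by omega) (by omega), (hpath j (by omega)).2⟩
        · have h0 : i = j + 1 := by omega
          rw [← h0]
          exact .refl
    refine ⟨C, hCX, cycleSet_iff.mpr ⟨hCX.trans hXE, ⟨f, hfC⟩, ?_, ?_⟩⟩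
    · rintro u hu v hv
      rw [hVOn] at hu hv
      obtain ⟨j1, hj1, rfl⟩ := hu
      obtain ⟨j2, hj2, rfl⟩ := hv
      exact (reach_symm (hchain j1 (Set.mem_Icc.mp hj1).1 (Set.mem_Icc.mp hj1).2)).trans
        (hchain j2 (Set.mem_Icc.mp hj2).1 (Set.mem_Icc.mp hj2).2)
    · intro v hv
      rw [hVOn] at hv
      obtain ⟨j, hj, rfl⟩ := hv
      obtain ⟨hji, hjN⟩ := Set.mem_Icc.mp hj
      have hlAtC : G.lAt C (vs j) = ∅ := by
        ext g
        constructor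
        · rintro ⟨hg, hdg⟩
          exact absurd (by rw [hdg]; exact Sym2.mk_isDiag_iff.mpr rfl) (hndC g hg)
        · exact fun h => h.elim
      have heAteq : (G.eAt C (vs j)).ncard = 2 := by
        rcases Nat.lt_or_ge j N with hjltN | hjgeN
        · rcases Nat.lt_or_ge i j with hiltj | higej
          · have hset : G.eAt C (vs j) = {es (j - 1), es j} := by
              ext g
              constructor
              · rintro ⟨hg, hvg, hnd⟩
                rcases hg with rfl | ⟨k, hk, rfl⟩
                · rcases (hmemf j hjN).mp hvg with rfl | rfl
                  · omega
                  · omega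
                · obtain ⟨hk1, hk2⟩ := Set.mem_Ico.mp hk
                  rcases (hmemes j k hjN hk2).mp hvg with rfl | h
                  · exact Or.inr rfl
                  · exact Or.inl (by rw [show k = j - 1 from by omega])
              · rintro (rfl | rfl)
                · have hm : es (j - 1) ∈ C := heskC (j - 1) (by omega) (by omega)
                  refine ⟨hm, ?_, hndC _ hm⟩
                  rw [hmemes j (j - 1) hjN (by omega)]
                  right; omega
                · have hm : es j ∈ C := heskC j hji hjltN
                  refine ⟨hm, ?_, hndC _ hm⟩
                  rw [hmemes j j hjN hjltN]
                  exact Or.inl rfl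
            rw [hset, Set.ncard_pair]
            intro h
            have := hesinj (j - 1) j (by omega) (by omega) h
            omega
          · have hji' : j = i := by omega
            subst hji'
            have hset : G.eAt C (vs j) = {f, es j} := by
              ext g
              constructor
              · rintro ⟨hg, hvg, hnd⟩
                rcases hg with rfl | ⟨k, hk, rfl⟩
                · exact Or.inl rfl
                · obtain ⟨hk1, hk2⟩ := Set.mem_Ico.mp hk
                  rcases (hmemes j k hjN hk2).mp hvg with rfl | h
                  · exact Or.inr rfl
                  · omega
              · rintro (rfl | rfl)
                · exact ⟨hfC, (hmemf j hjN).mpr (Or.inr rfl), hndC _ hfC⟩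
                · have hm : es j ∈ C := heskC j le_rfl hjltN
                  exact ⟨hm, (hmemes j j hjN hjltN).mpr (Or.inl rfl), hndC _ hm⟩
            rw [hset, Set.ncard_pair]
            exact fun h => (hfnotes j hjltN) h
        · have hjN' : j = N := by omega
          have hset : G.eAt C (vs j) = {f, es (N - 1)} := by
            ext g
            constructor
            · rintro ⟨hg, hvg, hnd⟩
              rcases hg with rfl | ⟨k, hk, rfl⟩
              · exact Or.inl rfl
              · obtain ⟨hk1, hk2⟩ := Set.mem_Ico.mp hk
                rcases (hmemes j k hjN hk2).mp hvg with rfl | h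
                · omega
                · exact Or.inr (by rw [show k = N - 1 from by omega]; rfl)
            · rintro (rfl | rfl)
              · exact ⟨hfC, (hmemf j hjN).mpr (Or.inl (by omega)), hndC _ hfC⟩
              · have hm : es (N - 1) ∈ C := heskC (N - 1) (by omega) (by omega)
                refine ⟨hm, ?_, hndC _ hm⟩
                rw [hmemes j (N - 1) hjN (by omega)]
                right; omega
          rw [hset, Set.ncard_pair]
          exact fun h => hfnotes (N - 1) (by omega) h
      unfold degOn
      rw [hlAtC, heAteq, Set.ncard_empty]
  · push_neg at hwmem
    exfalso
    apply hmax
    refine ⟨Function.update vs (N + 1) w, Function.update es N f, ?_, ?_⟩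
    · intro i hi
      rcases Nat.lt_or_ge i N with h | h
      · rw [Function.update_of_ne (by omega : i ≠ N),
          Function.update_of_ne (by omega : i ≠ N + 1),
          Function.update_of_ne (by omega : i + 1 ≠ N + 1)]
        exact hpath i h
      · have hiN : i = N := by omega
        rw [hiN, Function.update_self, Function.update_of_ne (by omega : N ≠ N + 1),
          Function.update_self]
        exact ⟨hfX, hfends⟩
    · intro i hi j hj hij
      rw [Set.mem_Iic] at hi hj
      rcases Nat.lt_or_ge i (N + 1) with h1 | h1 <;> rcases Nat.lt_or_ge j (N + 1) with h2 | h2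
      · rw [Function.update_of_ne (by omega : i ≠ N + 1),
          Function.update_of_ne (by omega : j ≠ N + 1)] at hij
        exact hinj (Set.mem_Iic.mpr (by omega)) (Set.mem_Iic.mpr (by omega)) hij
      · have hj' : j = N + 1 := by omega
        subst hj'
        rw [Function.update_of_ne (by omega : i ≠ N + 1), Function.update_self] at hij
        exact absurd hij.symm (hwmem i (by omega))
      · have hi' : i = N + 1 := by omega
        subst hi'
        rw [Function.update_self, Function.update_of_ne (by omega : j ≠ N + 1)] at hij
        exact absurd hij (hwmem j (by omega))
      · omega

lemma exists_leaf {X : Set β} (hXE : X ⊆ G.E) (hne : X.Nonempty)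
    (hac : G.AcyclicOn X) : ∃ v ∈ G.VOn X, G.degOn X v ≤ 1 := by
  by_contra h
  push_neg at h
  obtain ⟨C, hCX, hCyc⟩ := exists_cycle_of_min_degree hXE hne (fun v hv => h v hv)
  exact hac C hCX hCyc

/-! #### Counting -/

lemma acyclic_count {S : Set α} (hS : S.Finite) :
    ∀ n (X : Set β), X ⊆ G.E → G.AcyclicOn X → G.VOn X ⊆ S → X.ncard = n →
      n + (G.classesOn X S).ncard ≤ S.ncard := by
  intro n
  induction n with
  | zero =>
    intro X hXE hac hV hcard
    have hXfin : X.Finite := G.finE.subset hXE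
    obtain rfl := (Set.ncard_eq_zero hXfin).mp hcard
    rw [classesOn_empty_ncard hS]
    omega
  | succ n ih =>
    intro X hXE hac hV hcard
    have hXfin : X.Finite := G.finE.subset hXE
    have hXne : X.Nonempty := by
      rw [Set.nonempty_iff_ne_empty]
      intro h
      rw [h, Set.ncard_empty] at hcard
      omega
    obtain ⟨v0, hv0, hv0deg⟩ := exists_leaf hXE hXne hac
    obtain ⟨e0, he0X, hve0⟩ := hv0
    have hnl : ∀ f ∈ X, ¬(G.ends f).IsDiag := fun f hf => noloop_of_acyclic hac hXE hf
    have he0eAt : e0 ∈ G.eAt X v0 := ⟨he0X, hve0, hnl e0 he0X⟩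
    have heAtfin : (G.eAt X v0).Finite := hXfin.subset (eAt_subset _ _)
    have h1 : (G.eAt X v0).ncard ≤ 1 := by
      unfold degOn at hv0deg
      omega
    have heAt : G.eAt X v0 = {e0} :=
      (Set.eq_of_subset_of_ncard_le (singleton_subset_iff.mpr he0eAt)
        (by rw [Set.ncard_singleton]; exact h1) heAtfin).symm
    have hleaf : ∀ f ∈ X \ {e0}, v0 ∉ G.ends f := by
      rintro f ⟨hfX, hfne⟩ hvf
      have hm : f ∈ G.eAt X v0 := ⟨hfX, hvf, hnl f hfX⟩
      rw [heAt] at hm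
      exact hfne hm
    set x := Sym2.Mem.other hve0 with hxdef
    have hends : G.ends e0 = s(x, v0) := by
      rw [← Sym2.other_spec hve0, Sym2.eq_swap]
    have hxv0 : x ≠ v0 := by
      intro h
      apply hnl e0 he0X
      rw [hends, h]
      exact Sym2.mk_isDiag_iff.mpr rfl
    have hxS : x ∈ S := hV ⟨e0, he0X, by rw [hends]; exact Sym2.mem_mk_left _ _⟩
    have hv0S : v0 ∈ S := hV ⟨e0, he0X, hve0⟩
    have hcount := classes_leaf hS he0X hends hxv0 hxS hv0S hleaf
    have hX'card : (X \ {e0}).ncard = n := by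
      rw [Set.ncard_diff_singleton_of_mem he0X, hcard]
      omega
    have hih := ih (X \ {e0}) (diff_subset.trans hXE)
      (fun C hC => hac C (hC.trans diff_subset))
      ((VOn_mono diff_subset).trans hV) hX'card
    omega

lemma count_ge {S : Set α} (hS : S.Finite) :
    ∀ n (X : Set β), X ⊆ G.E → X.ncard = n →
      S.ncard ≤ n + (G.classesOn X S).ncard := by
  intro n
  induction n with
  | zero =>
    intro X hXE hcard
    have hXfin : X.Finite := G.finE.subset hXE
    obtain rfl := (Set.ncard_eq_zero hXfin).mp hcard
    rw [classesOn_empty_ncard hS]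
    omega
  | succ n ih =>
    intro X hXE hcard
    have hXfin : X.Finite := G.finE.subset hXE
    have hXne : X.Nonempty := by
      rw [Set.nonempty_iff_ne_empty]
      intro h
      rw [h, Set.ncard_empty] at hcard
      omega
    obtain ⟨e, heX⟩ := hXne
    obtain ⟨x, y, hends⟩ := sym2_exists_eq (G.ends e)
    have h2 := classes_delete_le (G := G) hS (X := X) hends
    have hih := ih (X \ {e}) (diff_subset.trans hXE)
      (by rw [Set.ncard_diff_singleton_of_mem heX, hcard]; omega)
    omega

/-! #### Handshake lemma -/

lemma degOn_insert {X : Set β} {e : β} (he : e ∉ X) (hXfin : X.Finite) (v : α) :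
    G.degOn (insert e X) v = G.degOn X v +
      (if G.ends e = Sym2.diag v then 2 else if v ∈ G.ends e then 1 else 0) := by
  by_cases hd : G.ends e = Sym2.diag v
  · have hdd : (G.ends e).IsDiag := by
      rw [hd]; exact Sym2.mk_isDiag_iff.mpr rfl
    have h1 : G.eAt (insert e X) v = G.eAt X v := by
      ext g
      constructor
      · rintro ⟨rfl | hg, h2, h3⟩
        · exact absurd hdd h3
        · exact ⟨hg, h2, h3⟩
      · rintro ⟨hg, h2, h3⟩
        exact ⟨Or.inr hg, h2, h3⟩
    have h2 : G.lAt (insert e X) v = insert e (G.lAt X v) := by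
      ext g
      constructor
      · rintro ⟨rfl | hg, h3⟩
        · exact Or.inl rfl
        · exact Or.inr ⟨hg, h3⟩
      · rintro (rfl | ⟨hg, h3⟩)
        · exact ⟨Or.inl rfl, hd⟩
        · exact ⟨Or.inr hg, h3⟩
    have hnm : e ∉ G.lAt X v := fun h => he (lAt_subset _ _ h)
    rw [if_pos hd]
    unfold degOn
    rw [h1, h2, Set.ncard_insert_of_notMem hnm (hXfin.subset (lAt_subset _ _))]
    ring
  · by_cases hm : v ∈ G.ends e
    · have hnd : ¬(G.ends e).IsDiag := fun h => hd (eq_diag_of_isDiag h hm)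
      have h1 : G.eAt (insert e X) v = insert e (G.eAt X v) := by
        ext g
        constructor
        · rintro ⟨rfl | hg, h2, h3⟩
          · exact Or.inl rfl
          · exact Or.inr ⟨hg, h2, h3⟩
        · rintro (rfl | ⟨hg, h2, h3⟩)
          · exact ⟨Or.inl rfl, hm, hnd⟩
          · exact ⟨Or.inr hg, h2, h3⟩
      have h2 : G.lAt (insert e X) v = G.lAt X v := by
        ext g
        constructor
        · rintro ⟨rfl | hg, h3⟩
          · exact absurd h3 hd
          · exact ⟨hg, h3⟩
        · rintro ⟨hg, h3⟩
          exact ⟨Or.inr hg, h3⟩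
      have hnm : e ∉ G.eAt X v := fun h => he (eAt_subset _ _ h)
      rw [if_neg hd, if_pos hm]
      unfold degOn
      rw [h1, h2, Set.ncard_insert_of_notMem hnm (hXfin.subset (eAt_subset _ _))]
      omega
    · have h1 : G.eAt (insert e X) v = G.eAt X v := by
        ext g
        constructor
        · rintro ⟨rfl | hg, h2, h3⟩
          · exact absurd h2 hm
          · exact ⟨hg, h2, h3⟩
        · rintro ⟨hg, h2, h3⟩
          exact ⟨Or.inr hg, h2, h3⟩
      have h2 : G.lAt (insert e X) v = G.lAt X v := by
        ext g
        constructor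
        · rintro ⟨rfl | hg, h3⟩
          · exact absurd (by rw [h3]; exact mem_diag_iff.mpr rfl) hm
          · exact ⟨hg, h3⟩
        · rintro ⟨hg, h3⟩
          exact ⟨Or.inr hg, h3⟩
      rw [if_neg hd, if_neg hm]
      unfold degOn
      rw [h1, h2]
      omega

lemma sum_delta {S : Finset α} {e : β} (hS : ∀ x ∈ G.ends e, x ∈ S) :
    (∑ v ∈ S, if G.ends e = Sym2.diag v then 2 else if v ∈ G.ends e then 1 else 0) = 2 := by
  classical
  obtain ⟨x, y, hxy⟩ := sym2_exists_eq (G.ends e)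
  by_cases hxyeq : x = y
  · subst hxyeq
    have hdiag : ∀ v, (G.ends e = Sym2.diag v) ↔ v = x := by
      intro v
      rw [hxy]
      constructor
      · intro h
        have hm : v ∈ Sym2.diag v := mem_diag_iff.mpr rfl
        rw [← h, Sym2.mem_iff] at hm
        rcases hm with rfl | rfl <;> rfl
      · rintro rfl; rfl
    have hterm : ∀ v, (if G.ends e = Sym2.diag v then 2 else if v ∈ G.ends e then 1 else 0)
        = if v = x then 2 else 0 := by
      intro v
      by_cases hvx : v = x
      · rw [if_pos ((hdiag v).mpr hvx), if_pos hvx]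
      · rw [if_neg (fun h => hvx ((hdiag v).mp h)), if_neg hvx,
          if_neg (by rw [hxy, Sym2.mem_iff]; push_neg; exact ⟨hvx, hvx⟩)]
    rw [Finset.sum_congr rfl (fun v _ => hterm v), Finset.sum_ite_eq' S x (fun _ => 2),
      if_pos (hS x (by rw [hxy]; exact Sym2.mem_mk_left _ _))]
  · have hterm : ∀ v, (if G.ends e = Sym2.diag v then 2 else if v ∈ G.ends e then 1 else 0)
        = (if v = x then 1 else 0) + (if v = y then 1 else 0) := by
      intro v
      have hnd : G.ends e ≠ Sym2.diag v := by
        rw [hxy]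
        intro h
        have hdd : (s(x, y)).IsDiag := by rw [h]; exact Sym2.mk_isDiag_iff.mpr rfl
        exact hxyeq (Sym2.mk_isDiag_iff.mp hdd)
      rw [if_neg hnd, hxy]
      by_cases h1 : v = x
      · subst h1
        rw [if_pos (Sym2.mem_mk_left _ _), if_pos rfl, if_neg hxyeq]
      · by_cases h2 : v = y
        · subst h2
          rw [if_pos (Sym2.mem_mk_right _ _), if_neg h1, if_pos rfl]
        · rw [if_neg (by rw [Sym2.mem_iff]; push_neg; exact ⟨h1, h2⟩), if_neg h1, if_neg h2]
    rw [Finset.sum_congr rfl (fun v _ => hterm v), Finset.sum_add_distrib,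
      Finset.sum_ite_eq' S x (fun _ => 1), Finset.sum_ite_eq' S y (fun _ => 1),
      if_pos (hS x (by rw [hxy]; exact Sym2.mem_mk_left _ _)),
      if_pos (hS y (by rw [hxy]; exact Sym2.mem_mk_right _ _))]

lemma handshake {S : Finset α} :
    ∀ n (X : Set β), X ⊆ G.E → X.ncard = n → (∀ v ∈ G.VOn X, v ∈ S) →
      ∑ v ∈ S, G.degOn X v = 2 * X.ncard := by
  intro n
  induction n with
  | zero =>
    intro X hXE hcard hVS
    have hXfin : X.Finite := G.finE.subset hXE
    obtain rfl := (Set.ncard_eq_zero hXfin).mp hcard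
    rw [Set.ncard_empty, Finset.sum_eq_zero, mul_zero]
    intro v _
    exact degOn_eq_zero (by rintro ⟨g, hg, _⟩; exact hg)
  | succ n ih =>
    intro X hXE hcard hVS
    have hXfin : X.Finite := G.finE.subset hXE
    have hXne : X.Nonempty := by
      rw [Set.nonempty_iff_ne_empty]
      intro h
      rw [h, Set.ncard_empty] at hcard
      omega
    obtain ⟨e, heX⟩ := hXne
    have hrepr : insert e (X \ {e}) = X := by
      rw [Set.insert_diff_singleton, insert_eq_of_mem heX]
    have hnm : e ∉ X \ {e} := fun h => h.2 rfl
    have hd'fin : (X \ {e}).Finite := hXfin.sdiff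
    have hd'card : (X \ {e}).ncard = n := by
      rw [Set.ncard_diff_singleton_of_mem heX, hcard]
      omega
    have hih := ih (X \ {e}) (diff_subset.trans hXE) hd'card
      (fun v hv => hVS v (VOn_mono diff_subset hv))
    have hdel : (∑ v ∈ S, if G.ends e = Sym2.diag v then 2
        else if v ∈ G.ends e then 1 else 0) = 2 :=
      sum_delta (fun x hx => hVS x ⟨e, heX, hx⟩)
    calc ∑ v ∈ S, G.degOn X v
        = ∑ v ∈ S, G.degOn (insert e (X \ {e})) v := by rw [hrepr]
      _ = ∑ v ∈ S, (G.degOn (X \ {e}) v +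
            (if G.ends e = Sym2.diag v then 2 else if v ∈ G.ends e then 1 else 0)) :=
          Finset.sum_congr rfl (fun v _ => degOn_insert hnm hd'fin v)
      _ = 2 * (X \ {e}).ncard + 2 := by rw [Finset.sum_add_distrib, hih, hdel]
      _ = 2 * X.ncard := by rw [hd'card, hcard]; ring
  
lemma sum_all_eq_two {S : Finset α} {f : α → ℕ} (hsum : ∑ v ∈ S, f v = 2 * S.card)
    (hlb : ∀ v ∈ S, 2 ≤ f v) : ∀ v ∈ S, f v = 2 := by
  intro v hv
  by_contra h
  have h3 : 3 ≤ f v := by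
    have := hlb v hv
    omega
  have h4 : (S.erase v).card • 2 ≤ ∑ x ∈ S.erase v, f x :=
    Finset.card_nsmul_le_sum _ _ _ (fun x hx => hlb x (Finset.mem_of_mem_erase hx))
  have h5 : f v + ∑ x ∈ S.erase v, f x = ∑ x ∈ S, f x := Finset.add_sum_erase S f hv
  have h6 : (S.erase v).card = S.card - 1 := Finset.card_erase_of_mem hv
  have h7 : 1 ≤ S.card := Finset.card_pos.mpr ⟨v, hv⟩
  rw [smul_eq_mul] at h4
  omega

/-! #### The core lemma: a min-degree-2 set whose deletion of an edge is acyclic is a cycle -/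

lemma core_cycle {C : Set β} {e : β} (hCE : C ⊆ G.E) (heC : e ∈ C)
    (hdeg : ∀ v ∈ G.VOn C, 2 ≤ G.degOn C v)
    (hac : G.AcyclicOn (C \ {e})) :
    G.CycleSet C ∧ ∀ u ∈ G.VOn C, ∀ v ∈ G.VOn C, G.Reach (C \ {e}) u v := by
  classical
  have hCfin : C.Finite := G.finE.subset hCE
  set S : Set α := G.VOn C with hSdef
  have hSV : S ⊆ G.V := VOn_subset_V hCE
  have hSfin : S.Finite := G.finV.subset hSV
  have hSfcard : hSfin.toFinset.card = S.ncard := (Set.ncard_eq_toFinset_card _ hSfin).symm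
  have hsum : ∑ v ∈ hSfin.toFinset, G.degOn C v = 2 * C.ncard :=
    handshake C.ncard C hCE rfl (fun v hv => hSfin.mem_toFinset.mpr hv)
  have hge : hSfin.toFinset.card • 2 ≤ ∑ v ∈ hSfin.toFinset, G.degOn C v :=
    Finset.card_nsmul_le_sum _ _ _ (fun v hv => hdeg v (hSfin.mem_toFinset.mp hv))
  rw [smul_eq_mul] at hge
  have hCS : S.ncard ≤ C.ncard := by omega
  have hcount := acyclic_count (G := G) hSfin ((C \ {e}).ncard) (C \ {e})
    (diff_subset.trans hCE) hac (VOn_mono diff_subset) rfl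
  have hdcard : (C \ {e}).ncard = C.ncard - 1 := Set.ncard_diff_singleton_of_mem heC
  have hCpos : 0 < C.ncard := (Set.ncard_pos hCfin).mpr ⟨e, heC⟩
  obtain ⟨x0, y0, hxy0⟩ := sym2_exists_eq (G.ends e)
  have hSne : S.Nonempty := ⟨x0, e, heC, by rw [hxy0]; exact Sym2.mem_mk_left _ _⟩
  obtain ⟨v0, hv0⟩ := hSne
  have hccpos : 0 < (G.classesOn (C \ {e}) S).ncard :=
    (Set.ncard_pos (classesOn_finite hSfin)).mpr ⟨_, mem_classesOn hv0⟩
  have hcc1 : (G.classesOn (C \ {e}) S).ncard ≤ 1 := by omega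
  have hreach : ∀ u ∈ S, ∀ v ∈ S, G.Reach (C \ {e}) u v :=
    fun u hu v hv => reach_of_classes_subsingleton hSfin hcc1 hu hv
  have hSC : S.ncard = C.ncard := by omega
  have hdeg2 : ∀ v ∈ S, G.degOn C v = 2 := by
    have hall := sum_all_eq_two (S := hSfin.toFinset) (f := fun v => G.degOn C v)
      (by rw [hsum, hSfcard, hSC]) (fun v hv => hdeg v (hSfin.mem_toFinset.mp hv))
    exact fun v hv => hall v (hSfin.mem_toFinset.mpr hv)
  refine ⟨cycleSet_iff.mpr ⟨hCE, ⟨e, heC⟩, ?_, hdeg2⟩, hreach⟩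
  intro u hu v hv
  exact reach_mono diff_subset (hreach u hu v hv)

/-! #### A cycle inside a cycle -/

lemma cycle_eq_of_subset {C C' : Set β} (h : G.CycleSet C) (h' : G.CycleSet C')
    (hsub : C' ⊆ C) : C' = C := by
  obtain ⟨hCE, hCne, hCconn, hCdeg⟩ := cycleSet_iff.mp h
  obtain ⟨hCE', hC'ne, hC'conn, hC'deg⟩ := cycleSet_iff.mp h'
  have hCfin : C.Finite := G.finE.subset hCE
  have claim1 : ∀ v ∈ G.VOn C', ∀ f ∈ C, v ∈ G.ends f → f ∈ C' := by
    intro v hv f hf hvf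
    have h2' := hC'deg v hv
    have h2 := hCdeg v (VOn_mono hsub hv)
    unfold degOn at h2 h2'
    have hsube : G.eAt C' v ⊆ G.eAt C v := eAt_mono hsub v
    have hsubl : G.lAt C' v ⊆ G.lAt C v := lAt_mono hsub v
    have hfe : (G.eAt C v).Finite := hCfin.subset (eAt_subset _ _)
    have hfl : (G.lAt C v).Finite := hCfin.subset (lAt_subset _ _)
    have hle1 : (G.eAt C' v).ncard ≤ (G.eAt C v).ncard := Set.ncard_le_ncard hsube hfe
    have hle2 : (G.lAt C' v).ncard ≤ (G.lAt C v).ncard := Set.ncard_le_ncard hsubl hfl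
    have heq1 : (G.eAt C v).ncard ≤ (G.eAt C' v).ncard := by omega
    have heq2 : (G.lAt C v).ncard ≤ (G.lAt C' v).ncard := by omega
    have hset1 : G.eAt C' v = G.eAt C v := Set.eq_of_subset_of_ncard_le hsube heq1 hfe
    have hset2 : G.lAt C' v = G.lAt C v := Set.eq_of_subset_of_ncard_le hsubl heq2 hfl
    by_cases hd : (G.ends f).IsDiag
    · have hm : f ∈ G.lAt C v := ⟨hf, eq_diag_of_isDiag hd hvf⟩
      rw [← hset2] at hm
      exact lAt_subset _ _ hm
    · have hm : f ∈ G.eAt C v := ⟨hf, hvf, hd⟩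
      rw [← hset1] at hm
      exact eAt_subset _ _ hm
  have claim2 : ∀ u w, u ∈ G.VOn C' → G.Reach C u w → w ∈ G.VOn C' := by
    intro u w hu hr
    induction hr with
    | refl => exact hu
    | @tail b c _ hbc ih =>
      obtain ⟨f, hfC, hfends⟩ := hbc
      have hbm : b ∈ G.ends f := by rw [hfends]; exact Sym2.mem_mk_left _ _
      have hfC' : f ∈ C' := claim1 b ih f hfC hbm
      exact ⟨f, hfC', by rw [hfends]; exact Sym2.mem_mk_right _ _⟩
  apply subset_antisymm hsub
  intro f hf
  obtain ⟨e', he'⟩ := hC'ne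
  obtain ⟨x', y', hxy'⟩ := sym2_exists_eq (G.ends e')
  have hv0 : x' ∈ G.VOn C' := ⟨e', he', by rw [hxy']; exact Sym2.mem_mk_left _ _⟩
  obtain ⟨x, y, hxy⟩ := sym2_exists_eq (G.ends f)
  have hx : x ∈ G.VOn C := ⟨f, hf, by rw [hxy]; exact Sym2.mem_mk_left _ _⟩
  have hr : G.Reach C x' x := hCconn x' (VOn_mono hsub hv0) x hx
  have hxC' : x ∈ G.VOn C' := claim2 x' x hv0 hr
  exact claim1 x hxC' f hf (by rw [hxy]; exact Sym2.mem_mk_left _ _)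

/-! #### Maximal forests -/

lemma exists_max_forest {X₀ : Set β} (hX₀E : X₀ ⊆ G.E) (hac : G.AcyclicOn X₀) :
    ∃ F, X₀ ⊆ F ∧ F ⊆ G.E ∧ G.AcyclicOn F ∧
      F.ncard + (G.classesOn G.E G.V).ncard = G.V.ncard := by
  classical
  set A : Set (Set β) := {Y | X₀ ⊆ Y ∧ Y ⊆ G.E ∧ G.AcyclicOn Y} with hA
  have hAfin : A.Finite := G.finE.finite_subsets.subset (fun Y hY => hY.2.1)
  have hAne : A.Nonempty := ⟨X₀, Subset.rfl, hX₀E, hac⟩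
  obtain ⟨F, hFA, hFmax⟩ := Set.Finite.exists_maximalFor id A hAfin hAne
  obtain ⟨hX₀F, hFE, hFac⟩ := hFA
  have hstep : ∀ g ∈ G.E, ∀ a b, G.ends g = s(a, b) → G.Reach F a b := by
    intro g hg a b hends
    by_cases hgF : g ∈ F
    · exact ReflTransGen.single ⟨g, hgF, hends⟩
    by_cases hab : a = b
    · subst hab; exact .refl
    have hnotac : ¬ G.AcyclicOn (insert g F) := by
      intro hacc
      have heq : F = insert g F := subset_antisymm (subset_insert _ _)
        (hFmax (j := insert g F) ⟨hX₀F.trans (subset_insert _ _), insert_subset hg hFE, hacc⟩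
          (subset_insert _ _))
      exact hgF (heq ▸ mem_insert g F)
    have hex : ∃ C, C ⊆ insert g F ∧ G.CycleSet C := by
      by_contra hno
      push_neg at hno
      exact hnotac fun C hC => hno C hC
    obtain ⟨C, hCsub, hCyc⟩ := hex
    have hgC : g ∈ C := by
      by_contra hgC
      exact hFac C (fun x hx => (hCsub hx).resolve_left (fun hh => hgC (hh ▸ hx))) hCyc
    obtain ⟨hCE2, hCne, hCconn, hCdeg⟩ := cycleSet_iff.mp hCyc
    have hC'sub : C \ {g} ⊆ F := by
      rintro x ⟨hx, hxg⟩
      exact (hCsub hx).resolve_left hxg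
    have hCac : G.AcyclicOn (C \ {g}) := fun C' hC' => hFac C' (hC'.trans hC'sub)
    obtain ⟨_, hreach⟩ := core_cycle hCE2 hgC
      (fun v hv => le_of_eq (hCdeg v hv).symm) hCac
    have hag : a ∈ G.VOn C := ⟨g, hgC, by rw [hends]; exact Sym2.mem_mk_left _ _⟩
    have hbg : b ∈ G.VOn C := ⟨g, hgC, by rw [hends]; exact Sym2.mem_mk_right _ _⟩
    exact reach_mono hC'sub (hreach a hag b hbg)
  have hreachE : ∀ u v, G.Reach G.E u v → G.Reach F u v := by
    intro u v h
    induction h with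
    | refl => exact .refl
    | tail _ hbc ih =>
      obtain ⟨g, hgE, hgends⟩ := hbc
      exact ih.trans (hstep g hgE _ _ hgends)
  have hclseq : G.classesOn F G.V = G.classesOn G.E G.V := by
    unfold classesOn
    apply Set.image_congr
    intro v _
    ext u
    constructor
    · rintro ⟨hu, hr⟩
      exact ⟨hu, reach_mono hFE hr⟩
    · rintro ⟨hu, hr⟩
      exact ⟨hu, hreachE _ _ hr⟩
  have h1 := acyclic_count (G := G) G.finV F.ncard F hFE hFac (VOn_subset_V hFE) rfl
  have h2 := count_ge (G := G) G.finV F.ncard F hFE rfl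
  refine ⟨F, hX₀F, hFE, hFac, ?_⟩
  rw [← hclseq]
  omega

/-! #### Components -/

lemma graph_ext {G₁ G₂ : Graph α β} (hV : G₁.V = G₂.V) (hE : G₁.E = G₂.E)
    (hends : G₁.ends = G₂.ends) : G₁ = G₂ := by
  cases G₁
  cases G₂
  simp only at hV hE hends
  subst hV
  subst hE
  subst hends
  rfl

lemma ncomponents_eq_classes : G.ncomponents = (G.classesOn G.E G.V).ncard := by
  have h1 : {H : Graph α β | H.IsComponentOf G} = G.componentOf '' G.V := by
    ext H
    constructor
    · rintro ⟨v, hv, rfl⟩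
      exact ⟨v, hv, rfl⟩
    · rintro ⟨v, hv, rfl⟩
      exact ⟨v, hv, rfl⟩
  have hadjsymm : Symmetric G.Adj := by
    rintro u v ⟨e, he, hends⟩
    exact ⟨e, he, hends.trans Sym2.eq_swap⟩
  have hinj : Set.InjOn (fun H : Graph α β => H.V) (G.componentOf '' G.V) := by
    rintro H₁ ⟨v₁, hv₁, rfl⟩ H₂ ⟨v₂, hv₂, rfl⟩ hVeq
    simp only at hVeq
    have hv₂mem : v₂ ∈ (G.componentOf v₂).V := ⟨hv₂, .refl⟩
    rw [← hVeq] at hv₂mem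
    have hr : Relation.ReflTransGen G.Adj v₁ v₂ := hv₂mem.2
    have hiff : ∀ u, Relation.ReflTransGen G.Adj v₁ u ↔ Relation.ReflTransGen G.Adj v₂ u :=
      fun u => ⟨fun hh => ((@Relation.ReflTransGen.symmetric _ _ ⟨fun _ _ hh => hadjsymm hh⟩).symm _ _ hr).trans hh,
        fun hh => hr.trans hh⟩
    apply graph_ext
    · ext u
      exact and_congr_right fun _ => hiff u
    · ext g
      exact and_congr_right fun _ => forall_congr' fun x => forall_congr' fun _ => hiff x
    · rfl
  have h2 : (fun H : Graph α β => H.V) '' (G.componentOf '' G.V) = G.classesOn G.E G.V := by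
    rw [Set.image_image]
    rfl
  unfold ncomponents
  rw [h1, ← Set.ncard_image_of_injOn hinj, h2]

end Graph

/-! #### Matroid lemmas -/

lemma encard_eq_ncard {s : Set β} (h : s.Finite) : s.encard = s.ncard := by
  rw [h.encard_eq_coe_toFinset_card, Set.ncard_eq_toFinset_card _ h]

variable {M : Matroid β}

lemma rank_le_of_forall_indep (hME : M.E.Finite) {X : Set β} {n : ℕ}
    (h : ∀ I, M.Indep I → I ⊆ X → I.ncard ≤ n) : rank M X ≤ n := by
  unfold rank
  have hsup : (⨆ I ∈ {I : Set β | M.Indep I ∧ I ⊆ X}, I.encard) ≤ (n : ℕ∞) := by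
    apply iSup₂_le
    intro I hI
    rw [encard_eq_ncard (hME.subset hI.1.subset_ground)]
    exact_mod_cast h I hI.1 hI.2
  calc (⨆ I ∈ {I : Set β | M.Indep I ∧ I ⊆ X}, I.encard).toNat
      ≤ ((n : ℕ∞)).toNat := ENat.toNat_le_toNat hsup (by simp)
    _ = n := by simp

lemma ncard_le_rank_of_indep (hME : M.E.Finite) {X I : Set β} (hI : M.Indep I)
    (hIX : I ⊆ X) : I.ncard ≤ rank M X := by
  unfold rank
  have hle : I.encard ≤ ⨆ J ∈ {J : Set β | M.Indep J ∧ J ⊆ X}, J.encard :=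
    le_iSup₂ (f := fun (J : Set β) (_ : J ∈ {J : Set β | M.Indep J ∧ J ⊆ X}) => J.encard)
      I ⟨hI, hIX⟩
  have hub : (⨆ J ∈ {J : Set β | M.Indep J ∧ J ⊆ X}, J.encard) ≤ M.E.encard := by
    apply iSup₂_le
    intro J hJ
    exact Set.encard_mono hJ.1.subset_ground
  have hne : (⨆ J ∈ {J : Set β | M.Indep J ∧ J ⊆ X}, J.encard) ≠ ⊤ := by
    intro h
    rw [h, top_le_iff] at hub
    exact hME.encard_lt_top.ne hub
  have h2 := ENat.toNat_le_toNat hle hne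
  rwa [encard_eq_ncard (hME.subset hI.subset_ground), ENat.toNat_coe] at h2

lemma exists_circuit_subset_of_dep (hME : M.E.Finite) :
    ∀ n (D : Set β), D.ncard ≤ n → M.Dep D → ∃ C, C ⊆ D ∧ IsCircuit M C := by
  intro n
  induction n with
  | zero =>
    intro D hle hD
    have hfin : D.Finite := hME.subset hD.subset_ground
    have h0 : D.ncard = 0 := by omega
    obtain rfl := (Set.ncard_eq_zero hfin).mp h0
    exact absurd M.empty_indep (dep_iff.mp hD).1
  | succ n ih =>
    intro D hle hD
    by_cases hmin : ∀ D', D' ⊂ D → M.Indep D'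
    · exact ⟨D, Subset.rfl, hD, hmin⟩
    · push_neg at hmin
      obtain ⟨D', hD'ss, hD'ni⟩ := hmin
      have hD'dep : M.Dep D' := dep_iff.mpr ⟨hD'ni, hD'ss.subset.trans hD.subset_ground⟩
      have hfin : D.Finite := hME.subset hD.subset_ground
      have hlt : D'.ncard < D.ncard := Set.ncard_lt_ncard hD'ss hfin
      obtain ⟨C, hCsub, hC⟩ := ih D' (by omega) hD'dep
      exact ⟨C, hCsub.trans hD'ss.subset, hC⟩

lemma circuit_nonempty {C : Set β} (hC : IsCircuit M C) : C.Nonempty := by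
  rw [Set.nonempty_iff_ne_empty]
  rintro rfl
  exact (dep_iff.mp hC.1).1 M.empty_indep

lemma circuit_mem_closure_diff {C : Set β} {e : β} (hC : IsCircuit M C) (he : e ∈ C) :
    e ∈ M.closure (C \ {e}) := by
  have hind : M.Indep (C \ {e}) := hC.2 _ (Set.sdiff_singleton_ssubset.mpr he)
  rw [hind.mem_closure_iff]
  left
  rw [Set.insert_diff_singleton, insert_eq_of_mem he]
  exact hC.1

lemma exists_circuit_of_mem_closure (hME : M.E.Finite) {X : Set β} {f : β}
    (hf : f ∈ M.closure X) (hfX : f ∉ X) :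
    ∃ C, IsCircuit M C ∧ f ∈ C ∧ C ⊆ insert f X := by
  obtain ⟨I, hI⟩ := M.exists_isBasis' X
  have hfI : f ∈ M.closure I := by rw [hI.closure_eq_closure]; exact hf
  have hfnI : f ∉ I := fun h => hfX (hI.subset h)
  have hdep : M.Dep (insert f I) := by
    rcases hI.indep.mem_closure_iff.mp hfI with h | h
    · exact h
    · exact absurd h hfnI
  obtain ⟨C, hCsub, hCirc⟩ :=
    exists_circuit_subset_of_dep hME (insert f I).ncard (insert f I) le_rfl hdep
  refine ⟨C, hCirc, ?_, hCsub.trans (insert_subset_insert hI.subset)⟩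
  by_contra hfC
  have hCI : C ⊆ I := fun x hx => (hCsub hx).resolve_left (fun h => hfC (h ▸ hx))
  exact (dep_iff.mp hCirc.1).1 (hI.indep.subset hCI)

end Aux
/-- Let `G` be a finite graph with `c` connected components and let `M` be
a matroid. Then `M` is the cycle matroid `M(G)` of `G` if and only if `G` is a framework for
`M` and `r(M) ≤ |V(G)| − c`. -/
theorem statement0 {α : Type u} {β : Type v} (G : Graph α β) (M : Matroid β) :
    IsCycleMatroidOf G M ↔
      (Framework G M ∧ rank M M.E ≤ G.V.ncard - G.ncomponents) := by
  classical
  constructor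
  · rintro ⟨hME, hcirc⟩
    have hMEfin : M.E.Finite := by rw [hME]; exact G.finE
    have hind_ac : ∀ I, M.Indep I → G.AcyclicOn I := by
      intro I hI C hCI hCyc
      have hC : IsCircuit M C := (hcirc C).mpr hCyc
      exact (dep_iff.mp hC.1).1 (hI.subset hCI)
    have hsubE : ∀ I, M.Indep I → I ⊆ G.E := by
      intro I hI
      rw [← hME]
      exact hI.subset_ground
    refine ⟨⟨⟨hME.symm, ?_, ?_⟩, ?_⟩, ?_⟩
    · -- condition (2)
      rintro H ⟨v, hv, rfl⟩
      apply rank_le_of_forall_indep hMEfin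
      intro I hI hIH
      have hIE : I ⊆ G.E := hsubE I hI
      have hVI : G.VOn I ⊆ (G.componentOf v).V := by
        rintro u ⟨e, he, hu⟩
        have heH := hIH he
        exact ⟨G.ends_mem heH.1 hu, heH.2 u hu⟩
      have hSfin : (G.componentOf v).V.Finite := G.finV.subset (sep_subset _ _)
      have hcnt := Graph.acyclic_count (G := G) hSfin I.ncard I hIE (hind_ac I hI) hVI rfl
      omega
    · -- condition (3)
      intro v hv f hf
      by_cases hfX : f ∈ (G.deleteVertex v).E
      · exact Or.inl hfX
      have hfE : f ∈ G.E := by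
        rw [← hME]
        exact M.closure_subset_ground _ hf
      obtain ⟨C, hCirc2, hfC, hCsub⟩ := exists_circuit_of_mem_closure hMEfin hf hfX
      have hCyc := (hcirc C).mp hCirc2
      obtain ⟨hCE, hCne, hCconn, hCdeg⟩ := Graph.cycleSet_iff.mp hCyc
      by_cases hvf : v ∈ G.ends f
      · by_cases hdiag : (G.ends f).IsDiag
        · exact Or.inr ⟨hfE, eq_diag_of_isDiag hdiag hvf⟩
        · exfalso
          have hvV : v ∈ G.VOn C := ⟨f, hfC, hvf⟩
          have hd2 := hCdeg v hvV
          have heAt : G.eAt C v ⊆ {f} := by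
            rintro g ⟨hg, hvg, _⟩
            rcases hCsub hg with h | h
            · exact h
            · exact absurd rfl (h.2 v hvg)
          have hlAt : G.lAt C v = ∅ := by
            ext g
            constructor
            · rintro ⟨hg, hdg⟩
              rcases hCsub hg with h | h
              · subst h
                exact hdiag (by rw [hdg]; exact Sym2.mk_isDiag_iff.mpr rfl)
              · exact absurd rfl (h.2 v (by rw [hdg]; exact mem_diag_iff.mpr rfl))
            · exact fun h => h.elim
          have h1 : (G.eAt C v).ncard ≤ 1 := by
            calc (G.eAt C v).ncard ≤ ({f} : Set β).ncard :=
                  Set.ncard_le_ncard heAt (Set.finite_singleton f)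
              _ = 1 := Set.ncard_singleton f
          unfold Graph.degOn at hd2
          rw [hlAt, Set.ncard_empty] at hd2
          omega
      · exact (hfX ⟨hfE, fun x hx hxv => hvf (mem_singleton_iff.mp hxv ▸ hx)⟩).elim
    · -- condition (4)
      intro C hCirc2
      have hCyc := (hcirc C).mp hCirc2
      obtain ⟨hCE, _, hCconn, _⟩ := Graph.cycleSet_iff.mp hCyc
      intro u hu v hv w hw
      left
      rw [Graph.restrict_adj_eq hCE]
      rw [Graph.restrict_V_eq hCE] at hu hv
      exact hCconn u hu v hv
    · -- rank bound
      apply rank_le_of_forall_indep hMEfin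
      intro I hI _
      have hIE : I ⊆ G.E := hsubE I hI
      have hcnt := Graph.acyclic_count (G := G) G.finV I.ncard I hIE (hind_ac I hI)
        (Graph.VOn_subset_V hIE) rfl
      have hanti := Graph.classesOn_anti (G := G) (S := G.V) G.finV hIE
      have hcomp := Graph.ncomponents_eq_classes (G := G)
      omega
  · rintro ⟨⟨⟨hGE, _hcond2, hcond3⟩, _hcond4⟩, hrank⟩
    have hME : M.E = G.E := hGE.symm
    have hMEfin : M.E.Finite := by rw [hME]; exact G.finE
    -- circuits have minimum degree 2
    have hcirc_deg : ∀ C, IsCircuit M C → ∀ v ∈ G.VOn C, 2 ≤ G.degOn C v := by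
      intro C hC v hv
      have hCE : C ⊆ G.E := by rw [← hME]; exact hC.1.subset_ground
      obtain ⟨e0, he0C, hve0⟩ := hv
      by_contra hlt
      push_neg at hlt
      have hfin : C.Finite := G.finE.subset hCE
      have hlAt : G.lAt C v = ∅ := by
        by_contra hne
        obtain ⟨g, hg⟩ := Set.nonempty_iff_ne_empty.mpr hne
        have hpos : 0 < (G.lAt C v).ncard :=
          (Set.ncard_pos (hfin.subset (Graph.lAt_subset _ _))).mpr ⟨g, hg⟩
        unfold Graph.degOn at hlt
        omega
      have he0nd : ¬(G.ends e0).IsDiag := by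
        intro hd
        have hm : e0 ∈ G.lAt C v := ⟨he0C, eq_diag_of_isDiag hd hve0⟩
        rw [hlAt] at hm
        exact hm
      have he0eAt : e0 ∈ G.eAt C v := ⟨he0C, hve0, he0nd⟩
      have h1 : (G.eAt C v).ncard ≤ 1 := by
        unfold Graph.degOn at hlt
        omega
      have heAt : G.eAt C v = {e0} :=
        (Set.eq_of_subset_of_ncard_le (singleton_subset_iff.mpr he0eAt)
          (by rw [Set.ncard_singleton]; exact h1) (hfin.subset (Graph.eAt_subset _ _))).symm
      have hvV : v ∈ G.V := G.ends_mem (hCE he0C) hve0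
      have hsubdel : C \ {e0} ⊆ (G.deleteVertex v).E := by
        rintro g ⟨hgC, hge0⟩
        refine ⟨hCE hgC, ?_⟩
        intro x hx hxv
        rw [mem_singleton_iff] at hxv
        subst hxv
        by_cases hd : (G.ends g).IsDiag
        · have hm : g ∈ G.lAt C x := ⟨hgC, eq_diag_of_isDiag hd hx⟩
          rw [hlAt] at hm
          exact hm
        · have hm : g ∈ G.eAt C x := ⟨hgC, hx, hd⟩
          rw [heAt] at hm
          exact hge0 hm
      have hclo : e0 ∈ M.closure ((G.deleteVertex v).E) :=
        M.closure_subset_closure hsubdel (circuit_mem_closure_diff hC he0C)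
      rcases hcond3 v hvV hclo with h | h
      · exact absurd rfl (h.2 v hve0)
      · have hm : e0 ∈ G.lAt C v := ⟨he0C, h.2⟩
        rw [hlAt] at hm
        exact hm
    -- acyclic sets are independent
    have hac_ind : ∀ F, F ⊆ G.E → G.AcyclicOn F → M.Indep F := by
      intro F hFE hFac
      by_contra hni
      have hdep : M.Dep F := dep_iff.mpr ⟨hni, by rw [hME]; exact hFE⟩
      obtain ⟨C, hCF, hC⟩ := exists_circuit_subset_of_dep hMEfin F.ncard F le_rfl hdep
      have hCE : C ⊆ G.E := hCF.trans hFE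
      obtain ⟨Z, hZC, hZ⟩ :=
        Graph.exists_cycle_of_min_degree hCE (circuit_nonempty hC) (hcirc_deg C hC)
      exact hFac Z (hZC.trans hCF) hZ
    have hcc := Graph.ncomponents_eq_classes (G := G)
    have hacempty : G.AcyclicOn (∅ : Set β) := by
      intro C hC hCyc
      obtain ⟨e, he⟩ := (Graph.cycleSet_iff.mp hCyc).2.1
      exact hC he
    obtain ⟨F0, _, hF0E, hF0ac, hF0card⟩ :=
      Graph.exists_max_forest (G := G) (X₀ := ∅) (empty_subset _) hacempty
    have hF0ind := hac_ind F0 hF0E hF0ac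
    have hF0rank : F0.ncard ≤ rank M M.E :=
      ncard_le_rank_of_indep hMEfin hF0ind hF0ind.subset_ground
    have hrank_eq : rank M M.E = G.V.ncard - G.ncomponents := by omega
    -- cycles are dependent
    have hcyc_dep : ∀ Z, G.CycleSet Z → M.Dep Z := by
      intro Z hZ
      obtain ⟨hZE, hZne, hZconn, hZdeg⟩ := Graph.cycleSet_iff.mp hZ
      by_contra hnd
      have hZind : M.Indep Z := by
        by_contra hni
        exact hnd (dep_iff.mpr ⟨hni, by rw [hME]; exact hZE⟩)
      obtain ⟨e, heZ⟩ := hZne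
      have hZfin : Z.Finite := G.finE.subset hZE
      have hZ'ac : G.AcyclicOn (Z \ {e}) := by
        intro C' hC' hCyc'
        have hCeq : C' = Z := Graph.cycle_eq_of_subset hZ hCyc' (hC'.trans diff_subset)
        subst hCeq
        exact (hC' heZ).2 rfl
      obtain ⟨F, hZF, hFE, hFac, hFcard⟩ :=
        Graph.exists_max_forest (G := G) (diff_subset.trans hZE) hZ'ac
      have hFind := hac_ind F hFE hFac
      have heF : e ∉ F := by
        intro heF
        have hZsubF : Z ⊆ F := by
          intro g hg
          by_cases hge : g = e
          · subst hge; exact heF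
          · exact hZF ⟨hg, hge⟩
        exact hFac Z hZsubF hZ
      have hFr : F.ncard = rank M M.E := by omega
      have hinsdep : M.Dep (insert e F) := by
        rw [dep_iff]
        refine ⟨?_, insert_subset (by rw [hME]; exact hZE heZ) hFind.subset_ground⟩
        intro hins
        have hle := ncard_le_rank_of_indep hMEfin hins hins.subset_ground
        rw [Set.ncard_insert_of_notMem heF (G.finE.subset hFE)] at hle
        omega
      obtain ⟨C, hCsub, hC⟩ := exists_circuit_subset_of_dep hMEfin _ _ le_rfl hinsdep
      have heC : e ∈ C := by
        by_contra heC
        have hCF : C ⊆ F := fun x hx => (hCsub hx).resolve_left (fun h => heC (h ▸ hx))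
        exact (dep_iff.mp hC.1).1 (hFind.subset hCF)
      have hCE : C ⊆ G.E := by rw [← hME]; exact hC.1.subset_ground
      have hC'F : C \ {e} ⊆ F := by
        rintro x ⟨hx, hxe⟩
        exact (hCsub hx).resolve_left hxe
      have hCac : G.AcyclicOn (C \ {e}) := fun C' hC' => hFac C' (hC'.trans hC'F)
      obtain ⟨hCcyc, _⟩ := Graph.core_cycle hCE heC (hcirc_deg C hC) hCac
      have hZC : Z = C := by
        by_contra hne
        have hDF : (Z \ C) ∪ (C \ Z) ⊆ F := by
          rintro g (⟨hg, hgC⟩ | ⟨hg, hgZ⟩)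
          · exact hZF ⟨hg, fun h => hgC (h ▸ heC)⟩
          · exact hC'F ⟨hg, fun h => hgZ (h ▸ heZ)⟩
        have hDE : (Z \ C) ∪ (C \ Z) ⊆ G.E := hDF.trans hFE
        have hDne : ((Z \ C) ∪ (C \ Z)).Nonempty := by
          rw [Set.nonempty_iff_ne_empty]
          intro h
          apply hne
          apply subset_antisymm
          · intro x hx
            by_contra hxC
            have hm : x ∈ (Z \ C) ∪ (C \ Z) := Or.inl ⟨hx, hxC⟩
            rw [h] at hm
            exact hm
          · intro x hx
            by_contra hxZ
            have hm : x ∈ (Z \ C) ∪ (C \ Z) := Or.inr ⟨hx, hxZ⟩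
            rw [h] at hm
            exact hm
        obtain ⟨hCE2, hCne2, hCconn2, hCdeg2⟩ := Graph.cycleSet_iff.mp hCcyc
        have hdegD : ∀ v ∈ G.VOn ((Z \ C) ∪ (C \ Z)), 2 ≤ G.degOn ((Z \ C) ∪ (C \ Z)) v := by
          intro v hvD
          have hfinZC : (Z \ C).Finite := hZfin.sdiff
          have hfinCZ : (C \ Z).Finite := (G.finE.subset hCE).sdiff
          have hfinI : (Z ∩ C).Finite := hZfin.subset inter_subset_left
          have hdisj1 : Disjoint (Z \ C) (Z ∩ C) :=
            Set.disjoint_left.mpr fun x hx hx' => hx.2 hx'.2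
          have hdisj2 : Disjoint (C \ Z) (Z ∩ C) :=
            Set.disjoint_left.mpr fun x hx hx' => hx.2 hx'.1
          have hdisj3 : Disjoint (Z \ C) (C \ Z) :=
            Set.disjoint_left.mpr fun x hx hx' => hx'.2 hx.1
          have hsplitZ : G.degOn Z v = G.degOn (Z \ C) v + G.degOn (Z ∩ C) v := by
            conv_lhs => rw [← Set.diff_union_inter Z C]
            exact Graph.degOn_union hfinZC hfinI hdisj1 v
          have hsplitC : G.degOn C v = G.degOn (C \ Z) v + G.degOn (Z ∩ C) v := by
            conv_lhs => rw [← Set.diff_union_inter C Z, Set.inter_comm C Z]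
            exact Graph.degOn_union hfinCZ hfinI hdisj2 v
          have hsplitD : G.degOn ((Z \ C) ∪ (C \ Z)) v
              = G.degOn (Z \ C) v + G.degOn (C \ Z) v :=
            Graph.degOn_union hfinZC hfinCZ hdisj3 v
          have hdegZv : G.degOn Z v = 2 ∨ G.degOn Z v = 0 := by
            by_cases hvZ : v ∈ G.VOn Z
            · exact Or.inl (hZdeg v hvZ)
            · exact Or.inr (Graph.degOn_eq_zero hvZ)
          have hdegCv : G.degOn C v = 2 ∨ G.degOn C v = 0 := by
            by_cases hvC : v ∈ G.VOn C
            · exact Or.inl (hCdeg2 v hvC)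
            · exact Or.inr (Graph.degOn_eq_zero hvC)
          have hpos : 1 ≤ G.degOn ((Z \ C) ∪ (C \ Z)) v :=
            Graph.degOn_pos (hfinZC.union hfinCZ) hvD
          omega
        obtain ⟨Y, hYD, hYcyc⟩ := Graph.exists_cycle_of_min_degree hDE hDne hdegD
        exact hFac Y (hYD.trans hDF) hYcyc
      exact hnd (by rw [hZC]; exact hC.1)
    -- conclusion
    refine ⟨hME, fun C => ⟨?_, ?_⟩⟩
    · intro hC
      have hCE : C ⊆ G.E := by rw [← hME]; exact hC.1.subset_ground
      obtain ⟨Z, hZC, hZcyc⟩ :=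
        Graph.exists_cycle_of_min_degree hCE (circuit_nonempty hC) (hcirc_deg C hC)
      have hZdep := hcyc_dep Z hZcyc
      have hZeq : Z = C := by
        by_contra hne
        exact (dep_iff.mp hZdep).1 (hC.2 Z (ssubset_of_subset_of_ne hZC hne))
      rw [← hZeq]
      exact hZcyc
    · intro hCyc
      have hdep := hcyc_dep C hCyc
      obtain ⟨C', hC'C, hC'⟩ := exists_circuit_subset_of_dep hMEfin C.ncard C le_rfl hdep
      have hC'cyc : G.CycleSet C' := by
        have hC'E : C' ⊆ G.E := by rw [← hME]; exact hC'.1.subset_ground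
        obtain ⟨Z, hZC', hZcyc⟩ :=
          Graph.exists_cycle_of_min_degree hC'E (circuit_nonempty hC') (hcirc_deg C' hC')
        have hZdep := hcyc_dep Z hZcyc
        have hZeq : Z = C' := by
          by_contra hne
          exact (dep_iff.mp hZdep).1 (hC'.2 Z (ssubset_of_subset_of_ne hZC' hne))
        rw [← hZeq]
        exact hZcyc
      have hCeq : C' = C := Graph.cycle_eq_of_subset hCyc hC'cyc hC'C
      rw [← hCeq]
      exact hC'

end QuasiGraphicPaper
end

section
/- If G is a weak framework for a matroid M and X ⊆ E(M), then G[X] is a weak framework for the restriction M|X. -/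
open Set Matroid
open scoped Classical

namespace QuasiGraphicPaper

universe u v

/-! ### Matroid notions -/

variable {α : Type u} {β : Type v}

section Aux

/-- The rank of a set equals the cardinality of any `Basis'` of it. -/
lemma rank_eq_ncard_of_basis' {M : Matroid β} {I Y : Set β} (hI : M.IsBasis' I Y) :
    rank M Y = I.ncard := by
  rw [Set.ncard_def, rank]
  congr 1
  refine le_antisymm (iSup₂_le fun J hJ => ?_) (le_iSup₂_of_le I ⟨hI.indep, hI.subset⟩ le_rfl)
  obtain ⟨J', hJ', hJJ'⟩ := hJ.1.subset_isBasis'_of_subset hJ.2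
  exact (Set.encard_mono hJJ').trans (hJ'.encard_eq_encard hI).le

lemma rank_le_rank_of_subset {M : Matroid β} (hE : M.E.Finite) {Y Z : Set β} (hYZ : Y ⊆ Z) :
    rank M Y ≤ rank M Z := by
  obtain ⟨I, hI⟩ := M.exists_isBasis' Y
  obtain ⟨J, hJ, hIJ⟩ := hI.indep.subset_isBasis'_of_subset (hI.subset.trans hYZ)
  rw [rank_eq_ncard_of_basis' hI, rank_eq_ncard_of_basis' hJ]
  exact Set.ncard_le_ncard hIJ (hE.subset hJ.indep.subset_ground)

lemma rank_insert_le {M : Matroid β} (hE : M.E.Finite) {Y : Set β} {e : β}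
    (he : e ∈ M.E) (hecl : e ∉ M.closure Y) :
    rank M Y + 1 ≤ rank M (insert e Y) := by
  obtain ⟨I, hI⟩ := M.exists_isBasis' Y
  have heI : e ∉ M.closure I := by rwa [hI.closure_eq_closure]
  have heI' : e ∉ I := fun hmem => heI (M.subset_closure I hI.indep.subset_ground hmem)
  have hins : M.Indep (insert e I) := (hI.indep.insert_indep_iff_of_notMem heI').mpr ⟨he, heI⟩
  obtain ⟨J, hJ, hIJ⟩ := hins.subset_isBasis'_of_subset (insert_subset_insert hI.subset)
  rw [rank_eq_ncard_of_basis' hI, rank_eq_ncard_of_basis' hJ]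
  have hJfin : J.Finite := hE.subset hJ.indep.subset_ground
  have hIfin : I.Finite := hE.subset hI.indep.subset_ground
  calc I.ncard + 1 = (insert e I).ncard := (Set.ncard_insert_of_notMem heI' hIfin).symm
    _ ≤ J.ncard := Set.ncard_le_ncard hIJ hJfin

lemma closure_restrict_subset {M : Matroid β} {X Y : Set β} (hYX : Y ⊆ X) (hXE : X ⊆ M.E) :
    (M ↾ X).closure Y ⊆ M.closure Y := by
  obtain ⟨I, hI⟩ := (M ↾ X).exists_isBasis' Y
  have h2 := Matroid.isBasis'_restrict_iff.1 hI
  rw [Set.inter_eq_self_of_subset_left hYX] at h2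
  have hIM : M.IsBasis' I Y := h2.1
  intro f hf
  rw [← hI.closure_eq_closure, hI.indep.mem_closure_iff'] at hf
  rw [← hIM.closure_eq_closure, hIM.indep.mem_closure_iff']
  refine ⟨hXE hf.1, fun hind => hf.2 ?_⟩
  exact Matroid.restrict_indep_iff.mpr ⟨hind, Set.insert_subset hf.1 h2.2⟩

lemma rank_restrict_eq {M : Matroid β} {X Y : Set β} (hYX : Y ⊆ X) :
    rank (M ↾ X) Y = rank M Y := by
  have hset : {I : Set β | (M ↾ X).Indep I ∧ I ⊆ Y} = {I : Set β | M.Indep I ∧ I ⊆ Y} := by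
    ext I
    simp only [Set.mem_setOf_eq, Matroid.restrict_indep_iff]
    exact ⟨fun hh => ⟨hh.1.1, hh.2⟩, fun hh => ⟨⟨hh.1, hh.2.trans hYX⟩, hh.2⟩⟩
  rw [rank, rank, hset]

lemma exists_crossing_edge {G : Graph α β} {W : Set α} {a b : α}
    (hab : Relation.ReflTransGen G.Adj a b) (ha : a ∈ W) :
    b ∉ W → ∃ w ∈ W, ∃ u, u ∉ W ∧ G.Adj w u := by
  induction hab with
  | refl => exact fun hb => absurd ha hb
  | @tail c d _ hcd ih =>
    intro hd
    by_cases hc : c ∈ W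
    · exact ⟨c, hc, d, hd, hcd⟩
    · exact ih hc

/-- Growing lemma: adding the missing vertices of a component one at a time, each new
vertex contributes at least one to the rank, thanks to condition (3). -/
lemma grow {G : Graph α β} {M : Matroid β} (h : WeakFramework G M) {v₀ : α}
    (hv₀ : v₀ ∈ G.V) :
    ∀ n (W : Set α), v₀ ∈ W → W ⊆ (G.componentOf v₀).V →
      ((G.componentOf v₀).V \ W).ncard = n →
      rank M {e ∈ G.E | ∀ x ∈ G.ends e, x ∈ W} + n ≤ rank M (G.componentOf v₀).E := by
  have hMfin : M.E.Finite := h.1 ▸ G.finE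
  have hKVfin : (G.componentOf v₀).V.Finite := G.finV.subset (sep_subset _ _)
  intro n
  induction n with
  | zero =>
    intro W hvW hWK hcard
    have hdiff : (G.componentOf v₀).V \ W = ∅ := (Set.ncard_eq_zero hKVfin.diff).1 hcard
    have hWeq : W = (G.componentOf v₀).V := by
      refine subset_antisymm hWK fun x hx => ?_
      by_contra hxW
      exact absurd (Set.mem_diff x |>.mpr ⟨hx, hxW⟩) (hdiff ▸ notMem_empty x)
    have hEeq : {e ∈ G.E | ∀ x ∈ G.ends e, x ∈ W} = (G.componentOf v₀).E := by
      subst hWeq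
      ext e
      constructor
      · rintro ⟨heE, hall⟩; exact ⟨heE, fun x hx => (hall x hx).2⟩
      · rintro ⟨heE, hall⟩; exact ⟨heE, fun x hx => ⟨G.ends_mem heE hx, hall x hx⟩⟩
    rw [hEeq]
    simp
  | succ n ih =>
    intro W hvW hWK hcard
    have hne : ((G.componentOf v₀).V \ W).Nonempty := by
      rw [Set.nonempty_iff_ne_empty]
      intro hempty
      rw [hempty, Set.ncard_empty] at hcard
      exact Nat.succ_ne_zero n hcard.symm
    obtain ⟨u', hu'⟩ := hne
    obtain ⟨w, hwW, u, huW, e, heE, hends⟩ :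
        ∃ w ∈ W, ∃ u, u ∉ W ∧ ∃ e ∈ G.E, G.ends e = s(w, u) := by
      obtain ⟨w, hw, u, hu, e, he, hends⟩ := exists_crossing_edge hu'.1.2 hvW hu'.2
      exact ⟨w, hw, u, hu, e, he, hends⟩
    have hwne : w ≠ u := fun hh => huW (hh ▸ hwW)
    have huV : u ∈ G.V := G.ends_mem heE (by rw [hends]; exact Sym2.mem_mk_right w u)
    have hureach : Relation.ReflTransGen G.Adj v₀ u :=
      (hWK hwW).2.tail ⟨e, heE, hends⟩
    have huK : u ∈ (G.componentOf v₀).V := ⟨huV, hureach⟩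
    have hsub : {f ∈ G.E | ∀ x ∈ G.ends f, x ∈ W} ⊆ (G.deleteVertex u).E := by
      rintro f ⟨hf, hall⟩
      refine ⟨hf, fun x hx hxu => ?_⟩
      rw [Set.mem_singleton_iff] at hxu
      exact huW (hxu ▸ hall x hx)
    have hecl : e ∉ M.closure {f ∈ G.E | ∀ x ∈ G.ends f, x ∈ W} := by
      intro hmem
      rcases h.2.2 u huV (M.closure_subset_closure hsub hmem) with h1 | h2
      · exact h1.2 u (by rw [hends]; exact Sym2.mem_mk_right w u) rfl
      · have hdiag : G.ends e = Sym2.diag u := h2.2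
        rw [hends] at hdiag
        have hdiag' : (s(w, u) : Sym2 α) = s(u, u) := hdiag
        rw [Sym2.eq_iff] at hdiag'
        exact hwne (by tauto)
    have heM : e ∈ M.E := h.1 ▸ heE
    have hstep := rank_insert_le hMfin heM hecl
    have hsubW' : insert e {f ∈ G.E | ∀ x ∈ G.ends f, x ∈ W} ⊆
        {f ∈ G.E | ∀ x ∈ G.ends f, x ∈ insert u W} := by
      intro f hf
      rcases Set.mem_insert_iff.1 hf with rfl | hf
      · refine ⟨heE, fun x hx => ?_⟩
        rw [hends, Sym2.mem_iff] at hx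
        rcases hx with hxw | hxu
        · rw [hxw]; exact Set.mem_insert_iff.mpr (Or.inr hwW)
        · rw [hxu]; exact Set.mem_insert u W
      · exact ⟨hf.1, fun x hx => Set.mem_insert_iff.mpr (Or.inr (hf.2 x hx))⟩
    have hmono := rank_le_rank_of_subset hMfin hsubW'
    have hcard' : ((G.componentOf v₀).V \ insert u W).ncard = n := by
      have heq : (G.componentOf v₀).V \ insert u W = ((G.componentOf v₀).V \ W) \ {u} := by
        ext x
        simp only [Set.mem_diff, Set.mem_insert_iff, Set.mem_singleton_iff]
        tauto
      rw [heq, Set.ncard_diff_singleton_of_mem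
        (show u ∈ (G.componentOf v₀).V \ W from ⟨huK, huW⟩), hcard]
      omega
    have hfinal := ih (insert u W) (Set.mem_insert_iff.mpr (Or.inr hvW))
      (Set.insert_subset huK hWK) hcard'
    omega

end Aux

/-- If `G` is a weak framework for a matroid `M` and `X ⊆ E(M)`, then
`G[X]` is a weak framework for the restriction `M|X`. -/
theorem statement7 {α : Type u} {β : Type v} (G : Graph α β) (M : Matroid β)
    (h : WeakFramework G M) (X : Set β) (hX : X ⊆ M.E) :
    WeakFramework (G.restrictEdges X) (M ↾ X) := by
  have hMfin : M.E.Finite := h.1 ▸ G.finE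
  have hXG : (G.restrictEdges X).E = X ∩ G.E := rfl
  have hVsub : (G.restrictEdges X).V ⊆ G.V := by
    rintro v ⟨e, he, hv⟩
    exact G.ends_mem he.2 hv
  refine ⟨?_, ?_, ?_⟩
  · show X ∩ G.E = X
    rw [h.1]
    exact Set.inter_eq_self_of_subset_left hX
  · rintro H ⟨v₀, hv₀, rfl⟩
    have hv₀G : v₀ ∈ G.V := hVsub hv₀
    set GX := G.restrictEdges X with hGX
    set W := (GX.componentOf v₀).V with hW
    have hadj : ∀ a b : α, GX.Adj a b → G.Adj a b := by
      rintro a b ⟨e, he, hends⟩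
      exact ⟨e, he.2, hends⟩
    have hWsub : W ⊆ (G.componentOf v₀).V := by
      rintro x ⟨hxV, hreach⟩
      exact ⟨hVsub hxV, Relation.ReflTransGen.mono (fun a b hab => hadj a b hab) _ _ hreach⟩
    have hv₀W : v₀ ∈ W := ⟨hv₀, Relation.ReflTransGen.refl⟩
    have hHE_X : (GX.componentOf v₀).E ⊆ X := fun e he => he.1.1
    have hHE_sub : (GX.componentOf v₀).E ⊆ {e ∈ G.E | ∀ x ∈ G.ends e, x ∈ W} := by
      rintro e ⟨heE, hall⟩
      exact ⟨heE.2, fun x hx => ⟨GX.ends_mem heE hx, hall x hx⟩⟩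
    have hgrow := grow h hv₀G (((G.componentOf v₀).V \ W).ncard) W hv₀W hWsub rfl
    have hcompK := h.2.1 (G.componentOf v₀) ⟨v₀, hv₀G, rfl⟩
    have hmono := rank_le_rank_of_subset hMfin hHE_sub
    have hKfin : (G.componentOf v₀).V.Finite := G.finV.subset (sep_subset _ _)
    have hcardeq : ((G.componentOf v₀).V \ W).ncard + W.ncard = (G.componentOf v₀).V.ncard :=
      Set.ncard_diff_add_ncard_of_subset hWsub hKfin
    rw [rank_restrict_eq hHE_X]
    omega
  · intro v hv
    have hvG : v ∈ G.V := hVsub hv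
    intro f hf
    have hYX : ((G.restrictEdges X).deleteVertex v).E ⊆ X := fun e he => he.1.1
    have hXE' : X ⊆ M.E := hX
    have hfX : f ∈ X := (M ↾ X).closure_subset_ground _ hf
    have hfM : f ∈ M.closure (((G.restrictEdges X).deleteVertex v).E) :=
      closure_restrict_subset hYX hXE' hf
    have hsubdel : ((G.restrictEdges X).deleteVertex v).E ⊆ (G.deleteVertex v).E :=
      fun e he => ⟨he.1.2, he.2⟩
    rcases h.2.2 v hvG (M.closure_subset_closure hsubdel hfM) with h1 | h2
    · exact Or.inl ⟨⟨hfX, h1.1⟩, h1.2⟩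
    · exact Or.inr ⟨⟨hfX, h2.1⟩, h2.2⟩

end QuasiGraphicPaper
end

section
/- Let G be a finite graph with c connected components and let M be a matroid. If G is a weak framework for M and r(M) ≤ |V(G)| − c, then M is the cycle matroid M(G) of G. -/
open Set Matroid
open scoped Classical

namespace QuasiGraphicPaper

universe u v

/-! ### Matroid notions -/

variable {α : Type u} {β : Type v}

section Aux
open Graph

variable {G : Graph α β} {M : Matroid β}

lemma adj_symm (G : Graph α β) : Symmetric G.Adj := by
  rintro u v ⟨e, he, h⟩
  exact ⟨e, he, by rwa [Sym2.eq_swap]⟩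

lemma reach_symm {u v : α} (h : Relation.ReflTransGen G.Adj u v) :
    Relation.ReflTransGen G.Adj v u :=
  (@Relation.ReflTransGen.symmetric _ _ ⟨fun a b h => adj_symm G h⟩).symm _ _ h

lemma mem_V_of_adj {u v : α} (h : G.Adj u v) : v ∈ G.V := by
  obtain ⟨e, he, huv⟩ := h
  exact G.ends_mem he (huv ▸ Sym2.mem_mk_right u v)

lemma reach_mem_V {u v : α} (hu : u ∈ G.V) (h : Relation.ReflTransGen G.Adj u v) : v ∈ G.V := by
  induction h with
  | refl => exact hu
  | tail _ h2 ih => exact mem_V_of_adj h2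

lemma restrict_E {X : Set β} (hX : X ⊆ G.E) : (G.restrictEdges X).E = X :=
  inter_eq_self_of_subset_left hX

lemma restrict_adj {X : Set β} {u v : α} (h : (G.restrictEdges X).Adj u v) : G.Adj u v := by
  obtain ⟨e, he, h⟩ := h
  exact ⟨e, he.2, h⟩

lemma mem_restrict_V {X : Set β} {x : α} :
    x ∈ (G.restrictEdges X).V ↔ ∃ e ∈ X ∩ G.E, x ∈ G.ends e := Iff.rfl

lemma restrict_V_subset {X : Set β} : (G.restrictEdges X).V ⊆ G.V := by
  rintro x ⟨e, ⟨-, he⟩, hx⟩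
  exact G.ends_mem he hx

lemma graph_ext {G₁ G₂ : Graph α β} (hV : G₁.V = G₂.V) (hE : G₁.E = G₂.E)
    (hends : G₁.ends = G₂.ends) : G₁ = G₂ := by
  cases G₁; cases G₂; simp_all

/-- The set of vertices reachable from `S`. -/
def clo (G : Graph α β) (S : Set α) : Set α :=
  {w ∈ G.V | ∃ u ∈ S, Relation.ReflTransGen G.Adj u w}

lemma subset_clo {S : Set α} (hS : S ⊆ G.V) : S ⊆ clo G S :=
  fun u hu => ⟨hS hu, u, hu, Relation.ReflTransGen.refl⟩

lemma clo_subset_V {S : Set α} : clo G S ⊆ G.V := fun _ h => h.1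

lemma clo_mono {S T : Set α} (h : S ⊆ T) : clo G S ⊆ clo G T := by
  rintro w ⟨hw, u, hu, hr⟩
  exact ⟨hw, u, h hu, hr⟩

lemma clo_clo {S : Set α} : clo G (clo G S) ⊆ clo G S := by
  rintro w ⟨hw, u, ⟨huV, x, hx, hxu⟩, hr⟩
  exact ⟨hw, x, hx, hxu.trans hr⟩

lemma exists_boundary {S : Set α} {u w : α} (hu : u ∈ S) (hw : w ∉ S)
    (h : Relation.ReflTransGen G.Adj u w) : ∃ a ∈ S, ∃ b, b ∉ S ∧ G.Adj a b := by
  induction h with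
  | refl => exact absurd hu hw
  | @tail b c h1 h2 ih =>
    by_cases hb : b ∈ S
    · exact ⟨b, hb, c, hw, h2⟩
    · exact ih hb

/-- Key insertion lemma from condition (3) of weak frameworks. -/
lemma insert_indep (hE : G.E = M.E)
    (hcl : ∀ v ∈ G.V, M.closure (G.deleteVertex v).E ⊆ (G.deleteVertex v).E ∪ G.loopsAt v)
    {X : Set β} (hX : M.Indep X) {w : α} (hw : w ∈ G.V)
    (hXw : ∀ f ∈ X, w ∉ G.ends f) (hXE : X ⊆ G.E)
    {e : β} (he : e ∈ G.E) (hwe : w ∈ G.ends e) (hnd : G.ends e ≠ Sym2.diag w) :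
    M.Indep (insert e X) := by
  have hXdel : X ⊆ (G.deleteVertex w).E := by
    intro f hf
    refine ⟨hXE hf, fun x hx hxw => ?_⟩
    rw [mem_singleton_iff] at hxw
    exact hXw f hf (hxw ▸ hx)
  have hecl : e ∉ M.closure X := by
    intro hecl
    rcases hcl w hw (M.closure_subset_closure hXdel hecl) with h1 | h2
    · exact h1.2 w hwe rfl
    · exact hnd h2.2
  rw [hX.insert_indep_iff]
  exact Or.inl ⟨hE ▸ he, hecl⟩

lemma ncard_le_rank (hfin : M.E.Finite) {I : Set β} (hI : M.Indep I) :
    I.ncard ≤ rank M M.E := by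
  have h1 : I.encard ≤ ⨆ I ∈ {I : Set β | M.Indep I ∧ I ⊆ M.E}, I.encard :=
    le_iSup₂ (f := fun (I : Set β) (_ : I ∈ {I : Set β | M.Indep I ∧ I ⊆ M.E}) => I.encard)
      I ⟨hI, hI.subset_ground⟩
  have h2 : (⨆ I ∈ {I : Set β | M.Indep I ∧ I ⊆ M.E}, I.encard) ≤ M.E.encard := by
    refine iSup₂_le fun J hJ => Set.encard_mono hJ.2
  exact ENat.toNat_le_toNat h1 (by exact ne_top_of_le_ne_top hfin.encard_lt_top.ne h2)

end Aux

section Grow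
open Graph

variable {G : Graph α β} {M : Matroid β}

lemma grow1 (hE : G.E = M.E)
    (hcl : ∀ v ∈ G.V, M.closure (G.deleteVertex v).E ⊆ (G.deleteVertex v).E ∪ G.loopsAt v) :
    ∀ (n : ℕ) (S : Set α) (X : Set β), (clo G S \ S).ncard = n → M.Indep X → X ⊆ G.E →
    (∀ e ∈ X, ∀ x ∈ G.ends e, x ∈ S) → S ⊆ G.V →
    ∃ X', M.Indep X' ∧ X' ⊆ G.E ∧ X ⊆ X' ∧
      (∀ e ∈ X', ∀ x ∈ G.ends e, x ∈ clo G S) ∧ X'.ncard = X.ncard + n := by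
  intro n
  induction n with
  | zero =>
    intro S X hn hX hXE hXS hSV
    exact ⟨X, hX, hXE, subset_rfl,
      fun e he x hx => subset_clo hSV (hXS e he x hx), by omega⟩
  | succ n ih =>
    intro S X hn hX hXE hXS hSV
    have hclofin : (clo G S \ S).Finite := (G.finV.subset clo_subset_V).subset diff_subset
    have hne : (clo G S \ S).Nonempty := Set.nonempty_of_ncard_ne_zero (by omega)
    obtain ⟨w, hwclo, hwS⟩ := hne
    obtain ⟨u, hu, hr⟩ := hwclo.2
    obtain ⟨a, ha, b, hb, hab⟩ := exists_boundary hu hwS hr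
    obtain ⟨e, he, hends⟩ := hab
    have hbV : b ∈ G.V := mem_V_of_adj ⟨e, he, hends⟩
    have hbclo : b ∈ clo G S :=
      ⟨hbV, a, ha, Relation.ReflTransGen.single ⟨e, he, hends⟩⟩
    have hXb : ∀ f ∈ X, b ∉ G.ends f := fun f hf hbf => hb (hXS f hf b hbf)
    have hIns : M.Indep (insert e X) := by
      refine insert_indep hE hcl hX hbV hXb hXE he (hends ▸ Sym2.mem_mk_right a b) ?_
      rw [hends]
      intro hdiag
      rw [show Sym2.diag b = s(b, b) from rfl, Sym2.eq_iff] at hdiag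
      rcases hdiag with ⟨h1, -⟩ | ⟨h1, -⟩ <;> exact hb (h1 ▸ ha)
    have hcloeq : clo G (insert b S) = clo G S := by
      apply subset_antisymm
      · rintro x ⟨hxV, u', hu', hr'⟩
        rcases hu' with rfl | hu'
        · exact ⟨hxV, a, ha, (Relation.ReflTransGen.single ⟨e, he, hends⟩).trans hr'⟩
        · exact ⟨hxV, u', hu', hr'⟩
      · exact clo_mono (subset_insert b S)
    have hcard2 : (clo G (insert b S) \ insert b S).ncard = n := by
      have : clo G (insert b S) \ insert b S = (clo G S \ S) \ {b} := by
        rw [hcloeq]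
        ext x
        simp only [mem_diff, mem_insert_iff, mem_singleton_iff]
        tauto
      rw [this]
      have := Set.ncard_diff_singleton_add_one (show b ∈ clo G S \ S from ⟨hbclo, hb⟩) hclofin
      omega
    obtain ⟨X', h1, h2, h3, h4, h5⟩ := ih (insert b S) (insert e X) hcard2 hIns
      (insert_subset he hXE)
      (by
        rintro f hf x hx
        rcases hf with rfl | hf
        · rw [hends] at hx
          rcases Sym2.mem_iff.mp hx with rfl | rfl
          · exact Or.inr ha
          · exact Or.inl rfl
        · exact Or.inr (hXS f hf x hx))
      (insert_subset hbV hSV)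
    have heX : e ∉ X := fun hct => hXb e hct (hends ▸ Sym2.mem_mk_right a b)
    refine ⟨X', h1, h2, (subset_insert e X).trans h3, fun f hf x hx => hcloeq ▸ h4 f hf x hx, ?_⟩
    rw [h5, Set.ncard_insert_of_notMem heX (G.finE.subset hXE)]
    omega

/-- components of `G`, as a set. -/
lemma compSet_eq : {H : Graph α β | H.IsComponentOf G} = G.componentOf '' G.V := by
  ext H
  simp only [mem_setOf_eq, Graph.IsComponentOf, mem_image]
  tauto

lemma compSet_finite : {H : Graph α β | H.IsComponentOf G}.Finite := by
  rw [compSet_eq]; exact G.finV.image _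

lemma componentOf_eq_of_reach {u w : α} (h : Relation.ReflTransGen G.Adj u w) :
    G.componentOf u = G.componentOf w := by
  have key : ∀ x, Relation.ReflTransGen G.Adj u x ↔ Relation.ReflTransGen G.Adj w x :=
    fun x => ⟨fun hx => (reach_symm h).trans hx, fun hx => h.trans hx⟩
  refine graph_ext ?_ ?_ rfl
  · ext x; exact and_congr_right fun _ => key x
  · ext f
    simp only [Graph.componentOf, mem_setOf_eq]
    exact and_congr_right fun _ => forall₂_congr (fun x _ => key x)

lemma mem_componentOf_V {u x : α} :
    x ∈ (G.componentOf u).V ↔ x ∈ G.V ∧ Relation.ReflTransGen G.Adj u x := Iff.rfl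

lemma growAll (hE : G.E = M.E)
    (hcl : ∀ v ∈ G.V, M.closure (G.deleteVertex v).E ⊆ (G.deleteVertex v).E ∪ G.loopsAt v) :
    ∀ (n : ℕ) (S : Set α) (X : Set β), (G.V \ S).ncard = n → M.Indep X → X ⊆ G.E →
    (∀ e ∈ X, ∀ x ∈ G.ends e, x ∈ S) → S ⊆ G.V → clo G S ⊆ S →
    ∃ X', M.Indep X' ∧ X' ⊆ G.E ∧
      X.ncard + (G.V \ S).ncard
        = X'.ncard + {H : Graph α β | H.IsComponentOf G ∧ H.V ∩ S = ∅}.ncard := by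
  intro n
  induction n using Nat.strong_induction_on with
  | _ n ih =>
  intro S X hn hX hXE hXS hSV hSclosed
  rcases Set.eq_empty_or_nonempty (G.V \ S) with hVS | hVS
  · refine ⟨X, hX, hXE, ?_⟩
    have hcomps : {H : Graph α β | H.IsComponentOf G ∧ H.V ∩ S = ∅} = ∅ := by
      ext H
      simp only [mem_setOf_eq, mem_empty_iff_false, iff_false, not_and]
      rintro ⟨u, huV, rfl⟩
      intro hHS
      have huS : u ∈ S := by
        by_contra huS
        exact absurd (hVS ▸ (show u ∈ G.V \ S from ⟨huV, huS⟩)) (notMem_empty u)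
      have : u ∈ (G.componentOf u).V ∩ S := ⟨⟨huV, Relation.ReflTransGen.refl⟩, huS⟩
      rw [hHS] at this
      exact this
    rw [hcomps, hVS]
    simp
  · obtain ⟨v, hvV, hvS⟩ := hVS
    set T := (G.componentOf v).V with hT
    have hTV : T ⊆ G.V := fun x hx => hx.1
    have hvT : v ∈ T := ⟨hvV, Relation.ReflTransGen.refl⟩
    have hTS : T ∩ S = ∅ := by
      ext x
      simp only [mem_inter_iff, mem_empty_iff_false, iff_false, not_and]
      intro hxT hxS
      exact hvS (hSclosed ⟨hvV, x, hxS, reach_symm hxT.2⟩)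
    have hcloS' : clo G (insert v S) = S ∪ T := by
      apply subset_antisymm
      · rintro x ⟨hxV, u, hu, hr⟩
        rcases hu with rfl | hu
        · exact Or.inr ⟨hxV, hr⟩
        · exact Or.inl (hSclosed ⟨hxV, u, hu, hr⟩)
      · rintro x (hx | hx)
        · exact ⟨hSV hx, x, Or.inr hx, Relation.ReflTransGen.refl⟩
        · exact ⟨hx.1, v, Or.inl rfl, hx.2⟩
    have hdiffeq : clo G (insert v S) \ insert v S = T \ {v} := by
      rw [hcloS']
      ext x
      simp only [mem_diff, mem_union, mem_insert_iff, mem_singleton_iff]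
      constructor
      · rintro ⟨hx | hx, hx2⟩
        · exact absurd hx (fun h => hx2 (Or.inr h))
        · exact ⟨hx, fun h => hx2 (Or.inl h)⟩
      · rintro ⟨hxT, hxv⟩
        refine ⟨Or.inr hxT, ?_⟩
        rintro (rfl | hxS)
        · exact hxv rfl
        · exact (Set.eq_empty_iff_forall_notMem.mp hTS x) ⟨hxT, hxS⟩
    have hTfin : T.Finite := G.finV.subset hTV
    obtain ⟨X1, hX1, hX1E, -, hX1ends, hX1card⟩ :=
      grow1 hE hcl (T \ {v}).ncard (insert v S) X (by rw [hdiffeq])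
        hX hXE (fun e he x hx => Or.inr (hXS e he x hx)) (insert_subset hvV hSV)
    set S₂ := S ∪ T with hS₂
    have hS₂V : S₂ ⊆ G.V := union_subset hSV hTV
    have hS₂closed : clo G S₂ ⊆ S₂ := by
      rintro x ⟨hxV, u, hu, hr⟩
      rcases hu with hu | hu
      · exact Or.inl (hSclosed ⟨hxV, u, hu, hr⟩)
      · exact Or.inr ⟨hxV, hu.2.trans hr⟩
    have hX1ends₂ : ∀ e ∈ X1, ∀ x ∈ G.ends e, x ∈ S₂ := by
      intro e he x hx
      have := hX1ends e he x hx
      rwa [hcloS'] at this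
    have hmeas : (G.V \ S₂).ncard < n := by
      rw [← hn]
      refine Set.ncard_lt_ncard ⟨fun x hx => ⟨hx.1, fun h => hx.2 (Or.inl h)⟩, ?_⟩
        (G.finV.sdiff)
      intro hsub
      exact (hsub ⟨hvV, hvS⟩).2 (Or.inr hvT)
    obtain ⟨X', hX', hX'E, hX'card⟩ := ih _ hmeas S₂ X1 rfl hX1 hX1E hX1ends₂ hS₂V hS₂closed
    refine ⟨X', hX', hX'E, ?_⟩
    -- component counting
    have hcompv : (G.componentOf v).IsComponentOf G := ⟨v, hvV, rfl⟩
    have hseteq : {H : Graph α β | H.IsComponentOf G ∧ H.V ∩ S = ∅}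
        = insert (G.componentOf v) {H : Graph α β | H.IsComponentOf G ∧ H.V ∩ S₂ = ∅} := by
      ext H
      simp only [mem_setOf_eq, mem_insert_iff]
      constructor
      · rintro ⟨⟨u, huV, rfl⟩, hHS⟩
        by_cases hc : G.componentOf u = G.componentOf v
        · exact Or.inl hc
        · refine Or.inr ⟨⟨u, huV, rfl⟩, ?_⟩
          ext x
          simp only [mem_inter_iff, mem_empty_iff_false, iff_false, not_and]
          rintro hxH (hxS | hxT)
          · exact (Set.eq_empty_iff_forall_notMem.mp hHS x) ⟨hxH, hxS⟩
          · exact hc ((componentOf_eq_of_reach hxH.2).trans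
              (componentOf_eq_of_reach hxT.2).symm)
      · rintro (rfl | ⟨hH, hHS⟩)
        · refine ⟨hcompv, hTS⟩
        · refine ⟨hH, ?_⟩
          ext x
          simp only [mem_inter_iff, mem_empty_iff_false, iff_false, not_and]
          intro hxH hxS
          exact (Set.eq_empty_iff_forall_notMem.mp hHS x) ⟨hxH, Or.inl hxS⟩
    have hnotmem : G.componentOf v ∉ {H : Graph α β | H.IsComponentOf G ∧ H.V ∩ S₂ = ∅} := by
      rintro ⟨-, hvint⟩
      exact (Set.eq_empty_iff_forall_notMem.mp hvint v) ⟨hvT, Or.inr hvT⟩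
    have hfin₂ : {H : Graph α β | H.IsComponentOf G ∧ H.V ∩ S₂ = ∅}.Finite :=
      compSet_finite.subset (fun H hH => hH.1)
    have hcompcard : {H : Graph α β | H.IsComponentOf G ∧ H.V ∩ S = ∅}.ncard
        = {H : Graph α β | H.IsComponentOf G ∧ H.V ∩ S₂ = ∅}.ncard + 1 := by
      rw [hseteq, Set.ncard_insert_of_notMem hnotmem hfin₂]
    -- vertex counting : G.V \ S = (G.V \ S₂) ∪ T, disjoint
    have hVsplit : G.V \ S = (G.V \ S₂) ∪ T := by
      ext x
      simp only [mem_diff, mem_union, hS₂]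
      constructor
      · rintro ⟨hxV, hxS⟩
        by_cases hxT : x ∈ T
        · exact Or.inr hxT
        · exact Or.inl ⟨hxV, fun h => h.elim hxS hxT⟩
      · rintro (⟨hxV, hxS⟩ | hxT)
        · exact ⟨hxV, fun h => hxS (Or.inl h)⟩
        · exact ⟨hTV hxT, fun h => (Set.eq_empty_iff_forall_notMem.mp hTS x) ⟨hxT, h⟩⟩
    have hVcard : (G.V \ S).ncard = (G.V \ S₂).ncard + T.ncard := by
      rw [hVsplit, Set.ncard_union_eq ?_ ((G.finV.sdiff)) hTfin]
      exact disjoint_left.mpr fun x hx hxT => hx.2 (Or.inr hxT)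
    have hTv : (T \ {v}).ncard + 1 = T.ncard := Set.ncard_diff_singleton_add_one hvT hTfin
    omega
end Grow

section Cycles
open Graph

variable {G : Graph α β} {M : Matroid β}

lemma degree_restrict {X : Set β} (hXE : X ⊆ G.E) (v : α) :
    (G.restrictEdges X).degree v =
      {e ∈ X | v ∈ G.ends e ∧ ¬(G.ends e).IsDiag}.ncard
        + 2 * {e ∈ X | G.ends e = Sym2.diag v}.ncard := by
  unfold Graph.degree
  rw [show (G.restrictEdges X).E = X from restrict_E hXE]
  rfl

lemma loop_cycleSet {e : β} (he : e ∈ G.E) (hd : (G.ends e).IsDiag) : G.CycleSet {e} := by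
  obtain ⟨a, b, hab⟩ : ∃ a b, G.ends e = s(a, b) := by
    induction G.ends e using Sym2.ind with | _ x y => exact ⟨x, y, rfl⟩
  rw [hab, Sym2.mk_isDiag_iff] at hd
  rw [← hd] at hab
  have hsub : ({e} : Set β) ⊆ G.E := singleton_subset_iff.mpr he
  have hV : (G.restrictEdges {e}).V = {a} := by
    ext x
    simp only [mem_restrict_V, mem_singleton_iff]
    constructor
    · rintro ⟨f, ⟨rfl, -⟩, hx⟩
      rw [hab, Sym2.mem_iff] at hx
      tauto
    · rintro rfl
      exact ⟨e, ⟨rfl, he⟩, hab ▸ Sym2.mem_mk_left _ _⟩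
  refine ⟨hsub, ?_, ?_, ?_⟩
  · rw [restrict_E hsub]; exact ⟨e, rfl⟩
  · intro u hu w hw
    rw [hV, mem_singleton_iff] at hu hw
    rw [hu, hw]
  · intro x hx
    rw [hV, mem_singleton_iff] at hx
    rw [hx, degree_restrict hsub]
    have h1 : {f ∈ ({e} : Set β) | a ∈ G.ends f ∧ ¬(G.ends f).IsDiag} = ∅ := by
      ext f
      simp only [mem_setOf_eq, mem_singleton_iff, mem_empty_iff_false, iff_false, not_and]
      rintro rfl hmem
      rw [not_not, hab]
      exact Sym2.mk_isDiag_iff.mpr rfl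
    have h2 : {f ∈ ({e} : Set β) | G.ends f = Sym2.diag a} = {e} := by
      ext f
      simp only [mem_setOf_eq, mem_singleton_iff]
      exact ⟨fun hf => hf.1, fun hf => ⟨hf, by rw [hf, hab]; rfl⟩⟩
    rw [h1, h2, Set.ncard_empty, Set.ncard_singleton]

lemma exists_cycleSet {X : Set β} (hXE : X ⊆ G.E) (hne : X.Nonempty)
    (hdeg : ∀ v ∈ (G.restrictEdges X).V, 2 ≤ (G.restrictEdges X).degree v) :
    ∃ C, C ⊆ X ∧ G.CycleSet C := by
  by_cases hdiag : ∃ e ∈ X, (G.ends e).IsDiag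
  · obtain ⟨e, heX, hd⟩ := hdiag
    exact ⟨{e}, singleton_subset_iff.mpr heX, loop_cycleSet (hXE heX) hd⟩
  push_neg at hdiag
  have hinc : ∀ v ∈ (G.restrictEdges X).V, 1 < {e ∈ X | v ∈ G.ends e}.ncard := by
    intro v hv
    have h2 := hdeg v hv
    rw [degree_restrict hXE] at h2
    have hL : {e ∈ X | G.ends e = Sym2.diag v} = ∅ := by
      ext f
      simp only [mem_setOf_eq, mem_empty_iff_false, iff_false, not_and]
      intro hf hfd
      exact hdiag f hf (hfd ▸ Sym2.diag_isDiag v)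
    have hN : {e ∈ X | v ∈ G.ends e ∧ ¬(G.ends e).IsDiag} = {e ∈ X | v ∈ G.ends e} := by
      ext f
      simp only [mem_setOf_eq, and_congr_right_iff]
      exact fun hf => ⟨fun h => h.1, fun h => ⟨h, hdiag f hf⟩⟩
    rw [hL, hN, Set.ncard_empty] at h2
    omega
  have hstep : ∀ v, v ∈ (G.restrictEdges X).V → ∀ f : β,
      ∃ p : α × β, p.2 ∈ X ∧ G.ends p.2 = s(v, p.1) ∧ p.2 ≠ f
        ∧ p.1 ∈ (G.restrictEdges X).V := by
    intro v hv f
    obtain ⟨e', he', hne'⟩ := Set.exists_ne_of_one_lt_ncard (hinc v hv) f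
    obtain ⟨w, hw⟩ := Sym2.mem_iff_exists.mp he'.2
    exact ⟨(w, e'), he'.1, hw, hne',
      ⟨e', ⟨he'.1, hXE he'.1⟩, hw ▸ Sym2.mem_mk_right v w⟩⟩
  obtain ⟨e0, he0⟩ := hne
  obtain ⟨a0, b0, hab0⟩ : ∃ a b, G.ends e0 = s(a, b) := by
    induction G.ends e0 using Sym2.ind with | _ x y => exact ⟨x, y, rfl⟩
  have hv0 : a0 ∈ (G.restrictEdges X).V :=
    ⟨e0, ⟨he0, hXE he0⟩, hab0 ▸ Sym2.mem_mk_left a0 b0⟩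
  have hchoice : ∀ p : α × β, ∃ q : α × β, p.1 ∈ (G.restrictEdges X).V →
      (q.2 ∈ X ∧ G.ends q.2 = s(p.1, q.1) ∧ q.2 ≠ p.2
        ∧ q.1 ∈ (G.restrictEdges X).V) := by
    intro p
    by_cases hp : p.1 ∈ (G.restrictEdges X).V
    · obtain ⟨q, hq⟩ := hstep p.1 hp p.2
      exact ⟨q, fun _ => hq⟩
    · exact ⟨p, fun hc => absurd hc hp⟩
  choose next hnext using hchoice
  have hmain : ∀ n, (next^[n] (a0, e0)).1 ∈ (G.restrictEdges X).V := by
    intro n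
    induction n with
    | zero => exact hv0
    | succ n ihn =>
      rw [Function.iterate_succ_apply']
      exact (hnext _ ihn).2.2.2
  have hedge' : ∀ n, (next^[n+1] (a0, e0)).2 ∈ X ∧
      G.ends ((next^[n+1] (a0, e0)).2)
        = s((next^[n] (a0, e0)).1, (next^[n+1] (a0, e0)).1) ∧
      (next^[n+1] (a0, e0)).2 ≠ (next^[n] (a0, e0)).2 := by
    intro n
    rw [Function.iterate_succ_apply']
    exact ⟨(hnext _ (hmain n)).1, (hnext _ (hmain n)).2.1, (hnext _ (hmain n)).2.2.1⟩
  have hkey : ∃ (vv : ℕ → α) (ff : ℕ → β), (∀ n, vv n ∈ (G.restrictEdges X).V) ∧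
      ∀ n, ff (n+1) ∈ X ∧ G.ends (ff (n+1)) = s(vv n, vv (n+1)) ∧ ff (n+1) ≠ ff n :=
    ⟨fun n => (next^[n] (a0, e0)).1, fun n => (next^[n] (a0, e0)).2, hmain, hedge'⟩
  obtain ⟨vv, ff, hvmem, hedge⟩ := hkey
  -- pigeonhole
  have hVfin : (G.restrictEdges X).V.Finite := G.finV.subset restrict_V_subset
  have hpig : ∃ j, ∃ i, i < j ∧ vv i = vv j := by
    obtain ⟨a, -, b, -, hab, heqab⟩ :=
      Finset.exists_ne_map_eq_of_card_lt_of_maps_to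
        (s := Finset.range ((G.restrictEdges X).V.ncard + 1)) (t := hVfin.toFinset)
        (by rw [Finset.card_range, ← Set.ncard_eq_toFinset_card _ hVfin]; omega)
        (fun n _ => hVfin.mem_toFinset.mpr (hvmem n))
    rcases Nat.lt_or_ge a b with h | h
    · exact ⟨b, a, h, heqab⟩
    · exact ⟨a, b, lt_of_le_of_ne h (Ne.symm hab), heqab.symm⟩
  set J := Nat.find hpig with hJdef
  obtain ⟨i, hiJ, hviJ⟩ := Nat.find_spec hpig
  have hinj' : ∀ a b, a < J → b < J → vv a = vv b → a = b := by
    intro a b ha hb hveq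
    by_contra hne'
    rcases Nat.lt_or_ge a b with h | h
    · exact Nat.find_min hpig hb ⟨a, h, hveq⟩
    · exact Nat.find_min hpig ha ⟨b, lt_of_le_of_ne h (Ne.symm hne'), hveq.symm⟩
  have huniq : ∀ t, t < J → vv t = vv J → t = i := fun t ht hveq =>
    hinj' t i ht hiJ (hveq.trans hviJ.symm)
  have hndg : ∀ n, vv n ≠ vv (n+1) := by
    intro n hv
    exact hdiag _ (hedge n).1 (by rw [(hedge n).2.1]; exact Sym2.mk_isDiag_iff.mpr hv)
  have hJi : i + 1 < J := by
    rcases Nat.lt_or_ge (i+1) J with hlt | hge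
    · exact hlt
    · exfalso
      have : J = i + 1 := by omega
      exact hndg i (this ▸ hviJ)
  have hends : ∀ k, 0 < k → ff k ∈ X ∧ G.ends (ff k) = s(vv (k-1), vv k)
      ∧ ff k ≠ ff (k-1) := by
    intro k hk
    have h := hedge (k-1)
    rwa [Nat.sub_add_cancel hk] at h
  set C : Set β := ff '' Set.Ioc i J with hCdef
  have hCX : C ⊆ X := by
    rintro _ ⟨k, hk, rfl⟩
    exact (hends k (by have := hk.1; omega)).1
  have hCE : C ⊆ G.E := hCX.trans hXE
  have hfinj : Set.InjOn ff (Set.Ioc i J) := by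
    have key : ∀ k l, k ∈ Set.Ioc i J → l ∈ Set.Ioc i J → k < l → ff k = ff l → False := by
      rintro k l ⟨hik, hkJ⟩ ⟨hil, hlJ⟩ hkl heq
      have hs : s(vv (k-1), vv k) = s(vv (l-1), vv l) := by
        rw [← (hends k (by omega)).2.1, heq, (hends l (by omega)).2.1]
      rw [Sym2.eq_iff] at hs
      rcases hs with ⟨hA, -⟩ | ⟨-, hB⟩
      · have : k - 1 = l - 1 := hinj' _ _ (by omega) (by omega) hA
        omega
      · have hkb : k = l - 1 := hinj' _ _ (by omega) (by omega) hB
        have : ff l = ff (l - 1) := by rw [← hkb]; exact heq.symm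
        exact (hends l (by omega)).2.2 this
    intro k hk l hl heq
    rcases lt_trichotomy k l with h | h | h
    · exact (key k l hk hl h heq).elim
    · exact h
    · exact (key l k hl hk h heq.symm).elim
  have hVC : (G.restrictEdges C).V = vv '' Set.Ico i J := by
    ext x
    constructor
    · rintro ⟨f, ⟨hfC, -⟩, hx⟩
      obtain ⟨k, ⟨hik, hkJ⟩, rfl⟩ := hfC
      rw [(hends k (by omega)).2.1] at hx
      rcases Sym2.mem_iff.mp hx with rfl | rfl
      · exact ⟨k-1, ⟨by omega, by omega⟩, rfl⟩
      · by_cases hkJ' : k = J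
        · exact ⟨i, ⟨le_refl i, hiJ⟩, by rw [hkJ', ← hviJ]⟩
        · exact ⟨k, ⟨by omega, by omega⟩, rfl⟩
    · rintro ⟨t, ⟨hit, htJ⟩, rfl⟩
      refine ⟨ff (t+1), ⟨⟨t+1, ⟨by omega, by omega⟩, rfl⟩, hXE (hedge t).1⟩, ?_⟩
      rw [(hedge t).2.1]
      exact Sym2.mem_mk_left _ _
  have hConn : (G.restrictEdges C).Connected := by
    have hreach : ∀ d, i + d < J →
        Relation.ReflTransGen (G.restrictEdges C).Adj (vv i) (vv (i + d)) := by
      intro d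
      induction d with
      | zero => intro _; exact Relation.ReflTransGen.refl
      | succ d ihd =>
        intro hd
        refine Relation.ReflTransGen.tail (ihd (by omega)) ?_
        exact ⟨ff (i + d + 1), ⟨⟨i + d + 1, ⟨by omega, by omega⟩, rfl⟩,
          hXE (hedge (i+d)).1⟩, (hedge (i + d)).2.1⟩
    intro u hu w hw
    rw [hVC] at hu hw
    obtain ⟨t, ⟨hit, htJ⟩, rfl⟩ := hu
    obtain ⟨t', ⟨hit', htJ'⟩, rfl⟩ := hw
    have h1 := hreach (t - i) (by omega)
    have h2 := hreach (t' - i) (by omega)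
    rw [show i + (t - i) = t from by omega] at h1
    rw [show i + (t' - i) = t' from by omega] at h2
    exact ((@Relation.ReflTransGen.symmetric _ _ ⟨fun a b h => adj_symm _ h⟩).symm _ _ h1).trans h2
  have hdeg2 : ∀ x ∈ (G.restrictEdges C).V, (G.restrictEdges C).degree x = 2 := by
    intro x hx
    rw [hVC] at hx
    obtain ⟨t, ⟨hit, htJ⟩, rfl⟩ := hx
    rw [degree_restrict hCE]
    have hL : {e ∈ C | G.ends e = Sym2.diag (vv t)} = ∅ := by
      ext f
      simp only [mem_setOf_eq, mem_empty_iff_false, iff_false, not_and]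
      intro hf hfd
      exact hdiag f (hCX hf) (hfd ▸ Sym2.diag_isDiag (vv t))
    have hNsub : ∀ k, k ∈ Set.Ioc i J → vv t ∈ G.ends (ff k) →
        (t = i ∧ (k = i + 1 ∨ k = J)) ∨ (i < t ∧ (k = t ∨ k = t + 1)) := by
      rintro k ⟨hik, hkJ⟩ hmem
      rw [(hends k (by omega)).2.1, Sym2.mem_iff] at hmem
      rcases hmem with hm | hm
      · have : t = k - 1 := hinj' _ _ (by omega) (by omega) hm
        rcases Nat.eq_or_lt_of_le hit with rfl | hlt
        · exact Or.inl ⟨rfl, Or.inl (by omega)⟩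
        · exact Or.inr ⟨hlt, Or.inr (by omega)⟩
      · by_cases hkJ' : k = J
        · subst hkJ'
          have : t = i := huniq t (by omega) hm
          exact Or.inl ⟨this, Or.inr rfl⟩
        · have : t = k := hinj' _ _ (by omega) (by omega) hm
          rcases Nat.eq_or_lt_of_le hit with rfl | hlt
          · omega
          · exact Or.inr ⟨hlt, Or.inl this.symm⟩
    have hmem1 : ∀ k, k ∈ Set.Ioc i J → ff k ∈ C := fun k hk => ⟨k, hk, rfl⟩
    have hN : {e ∈ C | vv t ∈ G.ends e ∧ ¬(G.ends e).IsDiag}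
        = if t = i then {ff (i+1), ff J} else {ff t, ff (t+1)} := by
      ext f
      simp only [mem_setOf_eq]
      split_ifs with hti
      · subst hti
        constructor
        · rintro ⟨⟨k, hk, rfl⟩, hm, -⟩
          rcases hNsub k hk hm with ⟨-, hor⟩ | ⟨hct, -⟩
          · rcases hor with rfl | rfl
            · exact Or.inl rfl
            · exact Or.inr rfl
          · omega
        · rintro (rfl | rfl)
          · refine ⟨hmem1 _ ⟨by omega, by omega⟩, ?_, hdiag _ (hedge t).1⟩
            rw [(hedge t).2.1]; exact Sym2.mem_mk_left _ _
          · refine ⟨hmem1 _ ⟨by omega, le_refl J⟩, ?_, hdiag _ (hends J (by omega)).1⟩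
            rw [(hends J (by omega)).2.1, Sym2.mem_iff]
            exact Or.inr hviJ
      · constructor
        · rintro ⟨⟨k, hk, rfl⟩, hm, -⟩
          rcases hNsub k hk hm with ⟨hct, -⟩ | ⟨-, hor⟩
          · exact absurd hct hti
          · rcases hor with rfl | rfl
            · exact Or.inl rfl
            · exact Or.inr rfl
        · have hit' : i < t := by omega
          rintro (rfl | rfl)
          · refine ⟨hmem1 _ ⟨by omega, by omega⟩, ?_, hdiag _ (hends t (by omega)).1⟩
            rw [(hends t (by omega)).2.1, Sym2.mem_iff]
            exact Or.inr rfl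
          · refine ⟨hmem1 _ ⟨by omega, by omega⟩, ?_, hdiag _ (hedge t).1⟩
            rw [(hedge t).2.1]; exact Sym2.mem_mk_left _ _
    rw [hL, hN, Set.ncard_empty]
    split_ifs with hti
    · rw [Set.ncard_pair (fun hc => by
        have := hfinj ⟨by omega, by omega⟩ ⟨by omega, le_refl J⟩ hc
        omega)]
    · rw [Set.ncard_pair (fun hc => by
        have := hfinj ⟨by omega, by omega⟩ ⟨by omega, by omega⟩ hc
        omega)]
  refine ⟨C, hCX, hCE, ?_, hConn, hdeg2⟩
  rw [restrict_E hCE]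
  exact ⟨ff J, ⟨J, ⟨hiJ, le_refl J⟩, rfl⟩⟩

end Cycles

section Handshake
open Graph

variable {G : Graph α β} {M : Matroid β}

lemma ncard_sep {γ : Type*} {s : Set γ} (hs : s.Finite) (P : γ → Prop) :
    {e ∈ s | P e}.ncard = (hs.toFinset.filter P).card := by
  have h : {e ∈ s | P e} = ↑(hs.toFinset.filter P) := by
    ext f
    simp [Set.Finite.mem_toFinset]
  rw [h, Set.ncard_coe_finset]

lemma double_count {γ δ : Type*} (s : Finset γ) (t : Finset δ) (r : γ → δ → Prop) :
    ∑ v ∈ s, (t.filter (r v)).card = ∑ e ∈ t, (s.filter (fun v => r v e)).card := by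
  simp_rw [Finset.card_filter]
  exact Finset.sum_comm

lemma ncard_V_le_of_cycle {C : Set β} (hC : G.CycleSet C) :
    (G.restrictEdges C).V.ncard ≤ C.ncard := by
  obtain ⟨hCE, hne, hconn, hdeg⟩ := hC
  have hVfin : (G.restrictEdges C).V.Finite := G.finV.subset restrict_V_subset
  have hCfin : C.Finite := G.finE.subset hCE
  have h1 : ∑ v ∈ hVfin.toFinset,
      ({e ∈ C | v ∈ G.ends e ∧ ¬(G.ends e).IsDiag}.ncard
        + 2 * {e ∈ C | G.ends e = Sym2.diag v}.ncard) = hVfin.toFinset.card * 2 := by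
    refine Finset.sum_const_nat fun v hv => ?_
    have h2 := hdeg v (hVfin.mem_toFinset.mp hv)
    rw [degree_restrict hCE] at h2
    exact h2
  have h2 : ∑ v ∈ hVfin.toFinset, {e ∈ C | v ∈ G.ends e ∧ ¬(G.ends e).IsDiag}.ncard
      = ∑ e ∈ hCfin.toFinset,
          {v ∈ (G.restrictEdges C).V | v ∈ G.ends e ∧ ¬(G.ends e).IsDiag}.ncard := by
    simp_rw [ncard_sep hCfin, ncard_sep hVfin]
    exact double_count _ _ _
  have h3 : ∑ v ∈ hVfin.toFinset, {e ∈ C | G.ends e = Sym2.diag v}.ncard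
      = ∑ e ∈ hCfin.toFinset,
          {v ∈ (G.restrictEdges C).V | G.ends e = Sym2.diag v}.ncard := by
    simp_rw [ncard_sep hCfin, ncard_sep hVfin]
    exact double_count _ _ _
  have h4 : ∀ e ∈ hCfin.toFinset,
      {v ∈ (G.restrictEdges C).V | v ∈ G.ends e ∧ ¬(G.ends e).IsDiag}.ncard
        + 2 * {v ∈ (G.restrictEdges C).V | G.ends e = Sym2.diag v}.ncard ≤ 2 := by
    intro e he
    obtain ⟨a, b, hab⟩ : ∃ a b, G.ends e = s(a, b) := by
      induction G.ends e using Sym2.ind with | _ x y => exact ⟨x, y, rfl⟩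
    by_cases hd : (G.ends e).IsDiag
    · have hN0 : {v ∈ (G.restrictEdges C).V | v ∈ G.ends e ∧ ¬(G.ends e).IsDiag} = ∅ := by
        ext v
        simp only [mem_setOf_eq, mem_empty_iff_false, iff_false, not_and]
        exact fun _ _ => not_not.mpr hd
      have hL1 : {v ∈ (G.restrictEdges C).V | G.ends e = Sym2.diag v} ⊆ {a} := by
        rintro v ⟨-, hv⟩
        rw [hab, Sym2.mk_isDiag_iff] at hd
        have hda : Sym2.diag v = Sym2.diag a := by
          rw [← hv, hab, ← hd]
          rfl
        simp [Sym2.diag_injective hda]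
      have := (Set.ncard_le_ncard hL1 (Set.finite_singleton a)).trans_eq
        (Set.ncard_singleton a)
      rw [hN0, Set.ncard_empty]
      omega
    · have hL0 : {v ∈ (G.restrictEdges C).V | G.ends e = Sym2.diag v} = ∅ := by
        ext v
        simp only [mem_setOf_eq, mem_empty_iff_false, iff_false, not_and]
        exact fun _ h => absurd (h ▸ Sym2.diag_isDiag v) hd
      have hN1 : {v ∈ (G.restrictEdges C).V | v ∈ G.ends e ∧ ¬(G.ends e).IsDiag}
          ⊆ {a, b} := by
        rintro v ⟨-, hv, -⟩
        rw [hab, Sym2.mem_iff] at hv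
        exact hv.imp (fun h => h) (fun h => h)
      have hab2 : ({a, b} : Set α).ncard ≤ 2 := by
        have := Set.ncard_insert_le a {b}
        simpa using this
      have := (Set.ncard_le_ncard hN1 (by
        exact (Set.finite_singleton b).insert a)).trans hab2
      rw [hL0, Set.ncard_empty]
      omega
  have h5 : ∑ e ∈ hCfin.toFinset,
      ({v ∈ (G.restrictEdges C).V | v ∈ G.ends e ∧ ¬(G.ends e).IsDiag}.ncard
        + 2 * {v ∈ (G.restrictEdges C).V | G.ends e = Sym2.diag v}.ncard)
      ≤ hCfin.toFinset.card * 2 := by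
    calc _ ≤ hCfin.toFinset.card • 2 := Finset.sum_le_card_nsmul _ _ 2 h4
    _ = hCfin.toFinset.card * 2 := smul_eq_mul _ _
  rw [Finset.sum_add_distrib] at h1 h5
  rw [show ∑ v ∈ hVfin.toFinset, 2 * {e ∈ C | G.ends e = Sym2.diag v}.ncard
      = 2 * ∑ v ∈ hVfin.toFinset, {e ∈ C | G.ends e = Sym2.diag v}.ncard from
    (Finset.mul_sum _ _ _).symm] at h1
  rw [show ∑ e ∈ hCfin.toFinset,
        2 * {v ∈ (G.restrictEdges C).V | G.ends e = Sym2.diag v}.ncard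
      = 2 * ∑ e ∈ hCfin.toFinset,
          {v ∈ (G.restrictEdges C).V | G.ends e = Sym2.diag v}.ncard from
    (Finset.mul_sum _ _ _).symm] at h5
  rw [Set.ncard_eq_toFinset_card _ hVfin, Set.ncard_eq_toFinset_card _ hCfin]
  omega

lemma cycleSet_subset_eq {C D : Set β} (hC : G.CycleSet C) (hD : G.CycleSet D)
    (hsub : D ⊆ C) : D = C := by
  obtain ⟨hCE, hCne, hCconn, hCdeg⟩ := hC
  obtain ⟨hDE, hDne, hDconn, hDdeg⟩ := hD
  have hVsub : (G.restrictEdges D).V ⊆ (G.restrictEdges C).V := by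
    rintro x ⟨f, ⟨hfD, hfE⟩, hx⟩
    exact ⟨f, ⟨hsub hfD, hfE⟩, hx⟩
  have hkey : ∀ v ∈ (G.restrictEdges D).V, ∀ e ∈ C, v ∈ G.ends e → e ∈ D := by
    intro v hv e heC hve
    have h2D := hDdeg v hv
    have h2C := hCdeg v (hVsub hv)
    rw [degree_restrict hDE] at h2D
    rw [degree_restrict hCE] at h2C
    have hNfin : {e ∈ C | v ∈ G.ends e ∧ ¬(G.ends e).IsDiag}.Finite :=
      (G.finE.subset hCE).subset (sep_subset _ _)
    have hLfin : {e ∈ C | G.ends e = Sym2.diag v}.Finite :=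
      (G.finE.subset hCE).subset (sep_subset _ _)
    have hNsub : {e ∈ D | v ∈ G.ends e ∧ ¬(G.ends e).IsDiag}
        ⊆ {e ∈ C | v ∈ G.ends e ∧ ¬(G.ends e).IsDiag} := fun f hf => ⟨hsub hf.1, hf.2⟩
    have hLsub : {e ∈ D | G.ends e = Sym2.diag v}
        ⊆ {e ∈ C | G.ends e = Sym2.diag v} := fun f hf => ⟨hsub hf.1, hf.2⟩
    have hN1 := Set.ncard_le_ncard hNsub hNfin
    have hL1 := Set.ncard_le_ncard hLsub hLfin
    have hNeq := Set.eq_of_subset_of_ncard_le hNsub (by omega) hNfin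
    have hLeq := Set.eq_of_subset_of_ncard_le hLsub (by omega) hLfin
    by_cases hd : (G.ends e).IsDiag
    · obtain ⟨a, b, hab⟩ : ∃ a b, G.ends e = s(a, b) := by
        induction G.ends e using Sym2.ind with | _ x y => exact ⟨x, y, rfl⟩
      rw [hab, Sym2.mk_isDiag_iff] at hd
      rw [← hd] at hab
      rw [hab, Sym2.mem_iff] at hve
      have hva : v = a := by tauto
      have hediag : G.ends e = Sym2.diag v := by rw [hab, hva]; rfl
      have : e ∈ {e ∈ D | G.ends e = Sym2.diag v} := hLeq ▸ ⟨heC, hediag⟩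
      exact this.1
    · have : e ∈ {e ∈ D | v ∈ G.ends e ∧ ¬(G.ends e).IsDiag} := hNeq ▸ ⟨heC, hve, hd⟩
      exact this.1
  have hstay : ∀ x y, Relation.ReflTransGen (G.restrictEdges C).Adj x y →
      x ∈ (G.restrictEdges D).V → y ∈ (G.restrictEdges D).V := by
    intro x y h
    induction h with
    | refl => exact id
    | @tail b c h1 h2 ih =>
      intro hx
      have hb := ih hx
      obtain ⟨f, ⟨hfC, hfE⟩, hends⟩ := h2
      have hfD : f ∈ D := hkey _ hb f hfC (hends ▸ Sym2.mem_mk_left _ _)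
      exact ⟨f, ⟨hfD, hfE⟩, hends ▸ Sym2.mem_mk_right _ _⟩
  refine subset_antisymm hsub ?_
  intro e heC
  rw [restrict_E hDE] at hDne
  obtain ⟨d0, hd0⟩ := hDne
  obtain ⟨a0, b0, hab0⟩ : ∃ a b, G.ends d0 = s(a, b) := by
    induction G.ends d0 using Sym2.ind with | _ x y => exact ⟨x, y, rfl⟩
  have ha0 : a0 ∈ (G.restrictEdges D).V := ⟨d0, ⟨hd0, hDE hd0⟩, hab0 ▸ Sym2.mem_mk_left _ _⟩
  obtain ⟨x0, y0, hxy0⟩ : ∃ a b, G.ends e = s(a, b) := by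
    induction G.ends e using Sym2.ind with | _ x y => exact ⟨x, y, rfl⟩
  have hx0 : x0 ∈ (G.restrictEdges C).V := ⟨e, ⟨heC, hCE heC⟩, hxy0 ▸ Sym2.mem_mk_left _ _⟩
  have hreach := hCconn a0 (hVsub ha0) x0 hx0
  exact hkey x0 (hstay _ _ hreach ha0) e heC (hxy0 ▸ Sym2.mem_mk_left _ _)

lemma indep_of_acyclic (hE : G.E = M.E)
    (hcl : ∀ v ∈ G.V, M.closure (G.deleteVertex v).E ⊆ (G.deleteVertex v).E ∪ G.loopsAt v) :
    ∀ (n : ℕ) (X : Set β), X.ncard = n → X ⊆ G.E → (∀ C, C ⊆ X → ¬ G.CycleSet C) →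
      M.Indep X := by
  intro n
  induction n using Nat.strong_induction_on with
  | _ n ih =>
  intro X hn hXE hacyc
  rcases X.eq_empty_or_nonempty with rfl | hne
  · exact M.empty_indep
  have hXfin : X.Finite := G.finE.subset hXE
  have hlow : ¬ ∀ v ∈ (G.restrictEdges X).V, 2 ≤ (G.restrictEdges X).degree v := by
    intro hdeg
    obtain ⟨C, hCX, hC⟩ := exists_cycleSet hXE hne hdeg
    exact hacyc C hCX hC
  push_neg at hlow
  obtain ⟨v, hv, hvdeg⟩ := hlow
  have hnoloop : ∀ f ∈ X, G.ends f ≠ Sym2.diag v := by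
    intro f hf hfd
    exact hacyc {f} (singleton_subset_iff.mpr hf)
      (loop_cycleSet (hXE hf) (hfd ▸ Sym2.diag_isDiag v))
  have hNset : {e ∈ X | v ∈ G.ends e ∧ ¬(G.ends e).IsDiag} = {e ∈ X | v ∈ G.ends e} := by
    ext f
    simp only [mem_setOf_eq, and_congr_right_iff]
    intro hf
    refine ⟨fun h => h.1, fun h => ⟨h, fun hdg => ?_⟩⟩
    obtain ⟨a, b, hab⟩ : ∃ a b, G.ends f = s(a, b) := by
      induction G.ends f using Sym2.ind with | _ x y => exact ⟨x, y, rfl⟩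
    rw [hab, Sym2.mk_isDiag_iff] at hdg
    rw [← hdg] at hab
    rw [hab, Sym2.mem_iff] at h
    have hva : v = a := by tauto
    exact hnoloop f hf (by rw [hab, hva]; rfl)
  have hL0 : {e ∈ X | G.ends e = Sym2.diag v} = ∅ := by
    ext f
    simp only [mem_setOf_eq, mem_empty_iff_false, iff_false, not_and]
    exact fun hf => hnoloop f hf
  rw [degree_restrict hXE, hNset, hL0, Set.ncard_empty] at hvdeg
  have hone : {e ∈ X | v ∈ G.ends e}.ncard = 1 := by
    obtain ⟨f0, ⟨hf0X, -⟩, hvf0⟩ := hv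
    have hf0mem : f0 ∈ {e ∈ X | v ∈ G.ends e} := ⟨hf0X, hvf0⟩
    have hfin : {e ∈ X | v ∈ G.ends e}.Finite := hXfin.subset (sep_subset _ _)
    have := (Set.ncard_pos hfin).mpr ⟨f0, hf0mem⟩
    omega
  obtain ⟨e1, he1⟩ := Set.ncard_eq_one.mp hone
  have he1mem : e1 ∈ {e ∈ X | v ∈ G.ends e} := he1 ▸ rfl
  have he1X : e1 ∈ X := he1mem.1
  have hve1 : v ∈ G.ends e1 := he1mem.2
  have hrest : X \ {e1} ⊆ G.E := diff_subset.trans hXE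
  have hXv : ∀ f ∈ X \ {e1}, v ∉ G.ends f := by
    rintro f ⟨hfX, hfne⟩ hvf
    have : f ∈ {e ∈ X | v ∈ G.ends e} := ⟨hfX, hvf⟩
    rw [he1, mem_singleton_iff] at this
    exact hfne this
  have hcard : (X \ {e1}).ncard < n := by
    have := Set.ncard_diff_singleton_add_one he1X hXfin
    omega
  have hind := ih _ hcard (X \ {e1}) rfl hrest (fun C hC => hacyc C (hC.trans diff_subset))
  have hvV : v ∈ G.V := restrict_V_subset hv
  have := insert_indep hE hcl hind hvV hXv hrest (hXE he1X) hve1 (hnoloop e1 he1X)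
  rwa [Set.insert_diff_singleton, Set.insert_eq_self.mpr he1X] at this

end Handshake

/-- Let `G` be a finite graph with `c` connected components and let `M`
be a matroid. If `G` is a weak framework for `M` and `r(M) ≤ |V(G)| − c`, then `M` is the
cycle matroid `M(G)` of `G`. -/
theorem statement10 {α : Type u} {β : Type v} (G : Graph α β) (M : Matroid β)
    (h : WeakFramework G M) (hr : rank M M.E ≤ G.V.ncard - G.ncomponents) :
    IsCycleMatroidOf G M := by
  obtain ⟨hE, hcomp, hcl⟩ := h
  have hEfin : M.E.Finite := hE ▸ G.finE
  have hforest : ∀ X : Set β, X ⊆ G.E → (∀ C, C ⊆ X → ¬ G.CycleSet C) → M.Indep X :=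
    fun X hXE hac => indep_of_acyclic hE hcl X.ncard X rfl hXE hac
  -- (b) : every cycle is dependent
  have hcycdep : ∀ C, G.CycleSet C → ¬ M.Indep C := by
    intro C hcyc hind
    obtain ⟨hCE, hCne', hCconn, hCdeg⟩ := hcyc
    have hCEne : C.Nonempty := by rwa [restrict_E hCE] at hCne'
    have hVCV : (G.restrictEdges C).V ⊆ G.V := restrict_V_subset
    obtain ⟨c0, hc0⟩ := hCEne
    obtain ⟨a0, b0, hab0⟩ : ∃ a b, G.ends c0 = s(a, b) := by
      induction G.ends c0 using Sym2.ind with | _ x y => exact ⟨x, y, rfl⟩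
    have hv0 : a0 ∈ (G.restrictEdges C).V :=
      ⟨c0, ⟨hc0, hCE hc0⟩, hab0 ▸ Sym2.mem_mk_left _ _⟩
    have hCend : ∀ e ∈ C, ∀ x ∈ G.ends e, x ∈ (G.restrictEdges C).V :=
      fun e he x hx => ⟨e, ⟨he, hCE he⟩, hx⟩
    obtain ⟨X1, hX1i, hX1E, -, hX1end, hX1c⟩ :=
      grow1 hE hcl _ (G.restrictEdges C).V C rfl hind hCE hCend hVCV
    obtain ⟨X', hX'i, hX'E, hX'c⟩ :=
      growAll hE hcl _ (clo G (G.restrictEdges C).V) X1 rfl hX1i hX1E hX1end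
        clo_subset_V clo_clo
    -- the components disjoint from `clo VC` are all components except that of `a0`
    have hAeq : {H : Graph α β | H.IsComponentOf G ∧ H.V ∩ clo G (G.restrictEdges C).V = ∅}
        = {H : Graph α β | H.IsComponentOf G} \ {G.componentOf a0} := by
      ext H
      simp only [mem_setOf_eq, mem_diff, mem_singleton_iff]
      constructor
      · rintro ⟨hH, hdisj⟩
        refine ⟨hH, ?_⟩
        rintro rfl
        have hmem : a0 ∈ (G.componentOf a0).V ∩ clo G (G.restrictEdges C).V :=
          ⟨⟨hVCV hv0, Relation.ReflTransGen.refl⟩, subset_clo hVCV hv0⟩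
        rw [hdisj] at hmem
        exact hmem
      · rintro ⟨⟨u, huV, rfl⟩, hnez⟩
        refine ⟨⟨u, huV, rfl⟩, ?_⟩
        ext x
        simp only [mem_inter_iff, mem_empty_iff_false, iff_false, not_and]
        rintro hxH ⟨hxV, y, hyVC, hyx⟩
        have h1 : Relation.ReflTransGen G.Adj a0 y :=
          Relation.ReflTransGen.mono (fun _ _ hadj => restrict_adj hadj) _ _ (hCconn a0 hv0 y hyVC)
        exact hnez ((componentOf_eq_of_reach hxH.2).trans
          (componentOf_eq_of_reach (h1.trans hyx)).symm)
    have hc1 : {H : Graph α β | H.IsComponentOf G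
          ∧ H.V ∩ clo G (G.restrictEdges C).V = ∅}.ncard + 1 = G.ncomponents := by
      rw [hAeq]
      exact Set.ncard_diff_singleton_add_one ⟨a0, hVCV hv0, rfl⟩ compSet_finite
    have hV1 : (G.V \ (G.restrictEdges C).V).ncard + (G.restrictEdges C).V.ncard
        = G.V.ncard := Set.ncard_diff_add_ncard_of_subset hVCV G.finV
    have hVCclo : (G.restrictEdges C).V ⊆ clo G (G.restrictEdges C).V := subset_clo hVCV
    have hsplit : (clo G (G.restrictEdges C).V \ (G.restrictEdges C).V).ncard
        + (G.V \ clo G (G.restrictEdges C).V).ncard = (G.V \ (G.restrictEdges C).V).ncard := by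
      have hu : G.V \ (G.restrictEdges C).V
          = (clo G (G.restrictEdges C).V \ (G.restrictEdges C).V)
            ∪ (G.V \ clo G (G.restrictEdges C).V) := by
        ext x
        simp only [mem_diff, mem_union]
        constructor
        · rintro ⟨hxV, hxVC⟩
          by_cases hxc : x ∈ clo G (G.restrictEdges C).V
          · exact Or.inl ⟨hxc, hxVC⟩
          · exact Or.inr ⟨hxV, hxc⟩
        · rintro (⟨hxc, hxVC⟩ | ⟨hxV, hxc⟩)
          · exact ⟨clo_subset_V hxc, hxVC⟩
          · exact ⟨hxV, fun hc => hxc (hVCclo hc)⟩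
      rw [hu, Set.ncard_union_eq ?_ ((G.finV.subset clo_subset_V).sdiff) (G.finV.sdiff)]
      exact disjoint_left.mpr fun x hx hx2 => hx2.2 hx.1
    have hhand : (G.restrictEdges C).V.ncard ≤ C.ncard :=
      ncard_V_le_of_cycle ⟨hCE, hCne', hCconn, hCdeg⟩
    have hrank := ncard_le_rank hEfin hX'i
    have hcle : G.ncomponents ≤ G.V.ncard := by
      have : G.ncomponents = (G.componentOf '' G.V).ncard := by
        rw [← compSet_eq]; rfl
      rw [this]
      exact Set.ncard_image_le G.finV
    omega
  refine ⟨hE.symm, fun C => ⟨?_, ?_⟩⟩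
  · rintro ⟨hdep, hmin⟩
    rw [Matroid.dep_iff] at hdep
    have hCE : C ⊆ G.E := hE ▸ hdep.2
    have hcyc : ∃ D, D ⊆ C ∧ G.CycleSet D := by
      by_contra hno
      push_neg at hno
      exact hdep.1 (hforest C hCE fun D hD => hno D hD)
    obtain ⟨D, hDC, hD⟩ := hcyc
    have hDeq : D = C := by
      by_contra hne
      exact hcycdep D hD (hmin D (hDC.ssubset_of_ne hne))
    exact hDeq ▸ hD
  · intro hcyc
    refine ⟨Matroid.dep_iff.mpr ⟨hcycdep C hcyc, hE ▸ hcyc.1⟩, ?_⟩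
    intro D hD
    refine hforest D (hD.subset.trans hcyc.1) fun D' hD' hD'cyc => ?_
    have heq := cycleSet_subset_eq hcyc hD'cyc (hD'.trans hD.subset)
    exact hD.not_subset (heq ▸ hD')


end QuasiGraphicPaper
end
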